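/- arXiv:0912.5002 — 5 statements merged into one kernel-verified Lean document; each statement's English description precedes it below -/
import Mathlib

section
/- (Restriction Lemma 1) Let Λ be a finite-dimensional algebra over a field, B a subalgebra of Λ, and M a finite-length Λ-module. Suppose that as a B-module, M = N ⊕ N' where N is an indecomposable non-simple B-submodule and N' is a semisimple B-module, and suppose that the socle of M as a Λ-module equals the socle of N as a B-module (as subspaces of M). Then M is indecomposable as a Λ-module. -/
/-- A module is indecomposable: nonzero and with no nontrivial direct decomposition. -/
def Indec (Λ : Type*) [Ring Λ] (M : Type*) [AddCommGroup M] [Module Λ M] : Prop :=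
  Nontrivial M ∧ ∀ A B : Submodule Λ M, IsCompl A B → A = ⊥ ∨ B = ⊥

/-- Restriction Lemma 1.  Let `Λ` be a finite-dimensional algebra over a field `k`,
`B ⊆ Λ` a subalgebra and `M` a finite-length `Λ`-module.  Suppose that, as a
`B`-module, `M = N ⊕ N'` with `N` an indecomposable non-simple `B`-submodule and
`N'` a semisimple `B`-module, and that the socle of `M` as a `Λ`-module coincides,
as a subset of `M`, with the socle of `N` as a `B`-module.  Then `M` is an
indecomposable `Λ`-module. -/
theorem restriction_lemma_one
    (k : Type*) [Field k] (Λ : Type*) [Ring Λ] [Algebra k Λ] [FiniteDimensional k Λ]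
    (M : Type*) [AddCommGroup M] [Module Λ M] [Module k M] [IsScalarTower k Λ M]
    (hfl : IsFiniteLength Λ M)
    (B : Subalgebra k Λ)
    (N N' : Submodule B M)
    (hcompl : IsCompl N N')
    (hindec : Indec B N)
    (hnonsimple : ¬ IsSimpleModule B N)
    (hss : ∃ 𝒮 : Set (Submodule B M), (∀ S ∈ 𝒮, IsAtom S) ∧ N' = sSup 𝒮)
    (hsoc : ((sSup {S : Submodule Λ M | IsAtom S} : Submodule Λ M) : Set M) =
      ((sSup {S : Submodule B M | IsAtom S ∧ S ≤ N} : Submodule B M) : Set M)) :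
    Indec Λ M := by
  classical
  obtain ⟨hNoe, hArt⟩ := isFiniteLength_iff_isNoetherian_isArtinian.mp hfl
  haveI := hNoe
  haveI := hArt
  haveI : Module.Finite Λ M := ⟨IsNoetherian.noetherian ⊤⟩
  haveI : Module.Finite k M := Module.Finite.trans Λ M
  haveI : IsNoetherian B M := isNoetherian_of_tower k inferInstance
  haveI : IsArtinian B M := isArtinian_of_tower k inferInstance
  haveI : IsAtomic (Submodule Λ M) :=
    isAtomic_of_orderBot_wellFounded_lt ((isArtinian_iff Λ M).mp inferInstance)
  -- every atom of `Submodule Λ M` is contained in `N`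
  have hsocN_le : (sSup {S : Submodule B M | IsAtom S ∧ S ≤ N}) ≤ N :=
    sSup_le fun S hS => hS.2
  have hmem : ∀ A : Submodule Λ M, IsAtom A → ∀ x ∈ A, x ∈ N := by
    intro A hA x hx
    have hle : A ≤ sSup {S : Submodule Λ M | IsAtom S} := le_sSup hA
    have h1 : x ∈ ((sSup {S : Submodule Λ M | IsAtom S} : Submodule Λ M) : Set M) := hle hx
    rw [hsoc] at h1
    exact hsocN_le h1
  obtain ⟨hNnt, hNind⟩ := hindec
  constructor
  · obtain ⟨x, hx⟩ := exists_ne (0 : N)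
    exact nontrivial_of_ne (x : M) 0 (by simpa using hx)
  intro X Y hXY
  by_contra hcon
  push_neg at hcon
  obtain ⟨hX, hY⟩ := hcon
  obtain ⟨AX, hAX, hAXle⟩ := (eq_bot_or_exists_atom_le X).resolve_left hX
  obtain ⟨AY, hAY, hAYle⟩ := (eq_bot_or_exists_atom_le Y).resolve_left hY
  -- the projections
  set pN : M →ₗ[B] N := N.linearProjOfIsCompl N' hcompl with hpN
  set πX : M →ₗ[Λ] X := X.linearProjOfIsCompl Y hXY with hπX
  set πY : M →ₗ[Λ] Y := Y.linearProjOfIsCompl X hXY.symm with hπY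
  set α : Module.End B N :=
    pN ∘ₗ ((X.subtype ∘ₗ πX).restrictScalars B) ∘ₗ N.subtype with hα
  set β : Module.End B N :=
    pN ∘ₗ ((Y.subtype ∘ₗ πY).restrictScalars B) ∘ₗ N.subtype with hβ
  have hαx : ∀ x : N, α x = pN ((πX (x : M) : M)) := fun x => rfl
  have hβx : ∀ x : N, β x = pN ((πY (x : M) : M)) := fun x => rfl
  have hαβ : ∀ x : N, α x + β x = x := by
    intro x
    rw [hαx, hβx, ← map_add,
      (show ((πX (x : M)) : M) + (πY (x : M) : M) = x from
        Submodule.projection_add_projection_eq_self hXY (x : M))]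
    exact Submodule.linearProjOfIsCompl_apply_left hcompl x
  -- Fitting's lemma for `α`
  obtain ⟨n, hn⟩ := Filter.eventually_atTop.mp (LinearMap.eventually_isCompl_ker_pow_range_pow α)
  have hfit := hn (n + 1) (Nat.le_succ n)
  rcases hNind _ _ hfit with hker | hrange
  · -- `α` is injective, so `N ∩ Y = 0`, contradicting the atom in `Y`
    have hinj : ∀ x : N, α x = 0 → x = 0 := by
      intro x hx
      have h2 : (α ^ (n + 1)) x = 0 := by
        rw [pow_succ, Module.End.mul_apply, hx, map_zero]
      have h3 : x ∈ LinearMap.ker (α ^ (n + 1)) := LinearMap.mem_ker.mpr h2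
      rw [hker] at h3
      simpa using h3
    obtain ⟨y, hyY, hy0⟩ := Submodule.exists_mem_ne_zero_of_ne_bot hAY.1
    have hyN : y ∈ N := hmem AY hAY y hyY
    have hyY' : y ∈ Y := hAYle hyY
    have : α ⟨y, hyN⟩ = 0 := by
      rw [hαx]
      have : πX y = 0 := Submodule.linearProjOfIsCompl_apply_right hXY ⟨y, hyY'⟩
      rw [show ((⟨y, hyN⟩ : N) : M) = y from rfl, this]
      simp
    have := hinj _ this
    exact hy0 (by simpa using congrArg (Subtype.val) this)
  · -- `α` is nilpotent, so `β` is injective, so `N ∩ X = 0`, contradicting the atom in `X`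
    have hnil : (α ^ (n + 1)) = 0 := LinearMap.range_eq_bot.mp hrange
    have hβinj : ∀ x : N, β x = 0 → x = 0 := by
      intro x hx
      have hxα : x = α x := by
        have := hαβ x; rw [hx, add_zero] at this; exact this.symm
      have hpow : ∀ m : ℕ, x = (α ^ m) x := by
        intro m
        induction m with
        | zero => simp
        | succ m ih =>
          calc x = (α ^ m) x := ih
          _ = (α ^ m) (α x) := by rw [← hxα]
          _ = (α ^ (m + 1)) x := by rw [pow_succ, Module.End.mul_apply]
      have := hpow (n + 1)
      rw [hnil] at this
      simpa using this
    obtain ⟨y, hyX, hy0⟩ := Submodule.exists_mem_ne_zero_of_ne_bot hAX.1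
    have hyN : y ∈ N := hmem AX hAX y hyX
    have hyX' : y ∈ X := hAXle hyX
    have : β ⟨y, hyN⟩ = 0 := by
      rw [hβx]
      have : πY y = 0 := Submodule.linearProjOfIsCompl_apply_right hXY.symm ⟨y, hyX'⟩
      rw [show ((⟨y, hyN⟩ : N) : M) = y from rfl, this]
      simp
    have := hβinj _ this
    exact hy0 (by simpa using congrArg (Subtype.val) this)
end

section
/- Let Λ be a finite-dimensional algebra with radical J, and suppose there exist linearly independent elements φ, ψ ∈ Λ and primitive idempotents e, f with φ = eφf, ψ = eψf and Jφ = Jψ = φJ = ψJ = 0. Then the ideal lattice of Λ is not distributive: the ideals I₁ = ΛφΛ, I₂ = ΛψΛ, I₃ = Λ(φ+ψ)Λ are pairwise distinct with I₁ ∩ I₂ = I₂ ∩ I₃ = I₃ ∩ I₁ = 0 and I₁ + I₂ = I₂ + I₃ = I₃ + I₁. -/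
/-- An idempotent is primitive if it is nonzero and is not the sum of two nonzero
orthogonal idempotents. -/
def IsPrimitiveIdempotent {Λ : Type*} [Ring Λ] (e : Λ) : Prop :=
  IsIdempotentElem e ∧ e ≠ 0 ∧
    ¬ ∃ a b : Λ, IsIdempotentElem a ∧ IsIdempotentElem b ∧ a ≠ 0 ∧ b ≠ 0 ∧
      a * b = 0 ∧ b * a = 0 ∧ e = a + b

/-- `Λ` is basic: `Λ/rad Λ` is a product of copies of the base field `k`. -/
def IsBasicAlgebra (k : Type*) [Field k] (Λ : Type*) [Ring Λ] [Algebra k Λ] : Prop :=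
  ∃ (n : ℕ) (π : Λ →+* (Fin n → k)),
    Function.Surjective π ∧ RingHom.ker π = Ideal.jacobson (⊥ : Ideal Λ)

/-- The two-sided ideal `ΛφΛ` generated by an element `φ`. -/
def idealGen {Λ : Type*} [Ring Λ] (φ : Λ) : Ideal Λ :=
  Submodule.span Λ {x : Λ | ∃ a b : Λ, x = a * φ * b}

section AuxJac

variable {Λ : Type*} [Ring Λ]

lemma aux_left_inv_one_sub {x : Λ} (hx : x ∈ Ideal.jacobson (⊥ : Ideal Λ)) :
    ∃ z : Λ, z * (1 - x) = 1 := by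
  obtain ⟨z, hz⟩ := Ideal.mem_jacobson_iff.mp hx (-1)
  rw [Ideal.mem_bot, sub_eq_zero] at hz
  refine ⟨z, ?_⟩
  rw [mul_sub, mul_one, ← hz]
  noncomm_ring

lemma aux_idem_jacobson_eq_zero {g : Λ} (hg : IsIdempotentElem g)
    (h : g ∈ Ideal.jacobson (⊥ : Ideal Λ)) : g = 0 := by
  obtain ⟨z, hz⟩ := aux_left_inv_one_sub h
  have h1 : (1 - g) * g = 0 := by
    rw [sub_mul, one_mul, hg.eq, sub_self]
  calc g = 1 * g := (one_mul g).symm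
    _ = z * (1 - g) * g := by rw [hz]
    _ = z * ((1 - g) * g) := by rw [mul_assoc]
    _ = 0 := by rw [h1, mul_zero]

lemma aux_nilpotent [IsArtinian Λ Λ] {x : Λ} (hx : x ∈ Ideal.jacobson (⊥ : Ideal Λ)) :
    IsNilpotent x := by
  have hmono : ∀ m m' : ℕ, m ≤ m' →
      (Submodule.span Λ {x ^ m'} : Ideal Λ) ≤ Submodule.span Λ {x ^ m} := by
    intro m m' hmm
    rw [Submodule.span_le, Set.singleton_subset_iff]
    have : x ^ m' = x ^ (m' - m) • x ^ m := by
      rw [smul_eq_mul, ← pow_add, Nat.sub_add_cancel hmm]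
    rw [this]
    exact Submodule.smul_mem _ _ (Submodule.mem_span_singleton_self _)
  let f : ℕ →o (Ideal Λ)ᵒᵈ :=
    ⟨fun m => Submodule.span Λ {x ^ m}, fun m m' h => hmono m m' h⟩
  obtain ⟨N, hN⟩ := IsArtinian.monotone_stabilizes f
  have heq : (Submodule.span Λ {x ^ N} : Ideal Λ) = Submodule.span Λ {x ^ (N + 1)} :=
    hN (N + 1) (Nat.le_succ N)
  have hxN : x ^ N ∈ (Submodule.span Λ {x ^ (N + 1)} : Ideal Λ) := by
    rw [← heq]; exact Submodule.mem_span_singleton_self _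
  obtain ⟨a, ha⟩ := Submodule.mem_span_singleton.mp hxN
  rw [smul_eq_mul] at ha
  have hax : a * x ∈ Ideal.jacobson (⊥ : Ideal Λ) := by
    have := Submodule.smul_mem (Ideal.jacobson (⊥ : Ideal Λ)) a hx
    rwa [smul_eq_mul] at this
  obtain ⟨z, hz⟩ := aux_left_inv_one_sub hax
  refine ⟨N, ?_⟩
  have h0 : (1 - a * x) * x ^ N = 0 := by
    rw [sub_mul, one_mul, mul_assoc, ← pow_succ', ha, sub_self]
  calc x ^ N = 1 * x ^ N := (one_mul _).symm
    _ = z * (1 - a * x) * x ^ N := by rw [hz]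
    _ = z * ((1 - a * x) * x ^ N) := by rw [mul_assoc]
    _ = 0 := by rw [h0, mul_zero]

end AuxJac

section AuxGen


lemma idealGen_mem_iff' {k Λ : Type*} [Field k] [Ring Λ] [Algebra k Λ] {χ : Λ}
    (h : ∀ a b : Λ, ∃ c : k, a * χ * b = c • χ) :
    ∀ x, x ∈ idealGen χ ↔ ∃ c : k, x = c • χ := by
  intro x
  constructor
  · intro hx
    refine Submodule.span_induction ?_ ?_ ?_ ?_ hx
    · rintro y ⟨a, b, rfl⟩; exact h a b
    · exact ⟨0, by simp⟩
    · rintro y z _ _ ⟨c, rfl⟩ ⟨d, rfl⟩; exact ⟨c + d, by rw [add_smul]⟩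
    · rintro r y _ ⟨c, rfl⟩
      obtain ⟨c', hc'⟩ := h r 1
      rw [mul_one] at hc'
      refine ⟨c * c', ?_⟩
      rw [smul_eq_mul, mul_smul_comm, hc', smul_smul, mul_comm c c']
  · rintro ⟨c, rfl⟩
    have hχ : χ ∈ idealGen χ :=
      Submodule.subset_span ⟨1, 1, by rw [one_mul, mul_one]⟩
    have hc : c • χ = (algebraMap k Λ c) • χ := by rw [Algebra.smul_def, smul_eq_mul]
    rw [hc]
    exact Submodule.smul_mem _ _ hχ

end AuxGen

/-- Suppose `Λ` is a (basic) finite-dimensional algebra over an algebraically closed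
field with radical `J`, and there are `k`-linearly independent elements `φ, ψ` and
primitive idempotents `e, f` with `φ = eφf`, `ψ = eψf`, `Jφ = Jψ = φJ = ψJ = 0`.
Then the ideal lattice of `Λ` is not distributive: the ideals `I₁ = ΛφΛ`,
`I₂ = ΛψΛ`, `I₃ = Λ(φ+ψ)Λ` are pairwise distinct with pairwise intersection `0`
and pairwise equal sums; in particular the distributive law fails for them. -/
theorem nondistributive_of_phi_psi
    (k : Type*) [Field k] [IsAlgClosed k]
    (Λ : Type*) [Ring Λ] [Algebra k Λ] [FiniteDimensional k Λ]
    (hbasic : IsBasicAlgebra k Λ)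
    (φ ψ : Λ) (hli : LinearIndependent k ![φ, ψ])
    (e f : Λ) (he : IsPrimitiveIdempotent e) (hf : IsPrimitiveIdempotent f)
    (hφ : φ = e * φ * f) (hψ : ψ = e * ψ * f)
    (hJ : ∀ a ∈ Ideal.jacobson (⊥ : Ideal Λ),
      a * φ = 0 ∧ a * ψ = 0 ∧ φ * a = 0 ∧ ψ * a = 0) :
    (idealGen φ ≠ idealGen ψ ∧ idealGen ψ ≠ idealGen (φ + ψ) ∧
        idealGen (φ + ψ) ≠ idealGen φ) ∧
    (idealGen φ ⊓ idealGen ψ = ⊥ ∧ idealGen ψ ⊓ idealGen (φ + ψ) = ⊥ ∧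
        idealGen (φ + ψ) ⊓ idealGen φ = ⊥) ∧
    (idealGen φ ⊔ idealGen ψ = idealGen ψ ⊔ idealGen (φ + ψ) ∧
        idealGen ψ ⊔ idealGen (φ + ψ) = idealGen (φ + ψ) ⊔ idealGen φ) ∧
    ¬ (idealGen φ ⊓ (idealGen ψ ⊔ idealGen (φ + ψ)) =
        (idealGen φ ⊓ idealGen ψ) ⊔ (idealGen φ ⊓ idealGen (φ + ψ))) := by
  obtain ⟨n, π, hsurj, hker⟩ := hbasic
  have hmemJ : ∀ x : Λ, x ∈ Ideal.jacobson (⊥ : Ideal Λ) ↔ π x = 0 := by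
    intro x
    rw [← hker]
    exact RingHom.mem_ker
  haveI : IsArtinian Λ Λ := isArtinian_of_tower k inferInstance
  have hnil : ∀ x ∈ RingHom.ker π, IsNilpotent x := by
    intro x hx
    rw [hker] at hx
    exact aux_nilpotent hx
  -- surjectivity of the coordinate scalar maps
  have hsigma : ∀ i : Fin n, ∀ c : k, ∃ μ : k, π (algebraMap k Λ μ) i = c := by
    intro i c
    obtain ⟨a, ha⟩ := hsurj (fun _ => c)
    have hca : π a i = c := by rw [ha]
    obtain ⟨p, hp, hpa⟩ := IsIntegral.of_finite k a
    set τ : Λ →+* k := (Pi.evalRingHom (fun _ : Fin n => k) i).comp π with hτ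
    set σ : k →+* k := τ.comp (algebraMap k Λ) with hσ
    have h0 : Polynomial.eval₂ σ c p = 0 := by
      have h1 := congrArg τ hpa
      rw [Polynomial.hom_eval₂] at h1
      have hτa : τ a = c := hca
      rw [hτa] at h1
      simpa [hσ] using h1
    have hq0 : (p.map σ).eval c = 0 := by rw [Polynomial.eval_map]; exact h0
    have hqne : p.map σ ≠ 0 := (hp.map σ).ne_zero
    have hc : c ∈ (p.map σ).roots := by
      rw [Polynomial.mem_roots hqne]
      exact hq0
    rw [(IsAlgClosed.splits p).roots_map_of_ne_zero hqne] at hc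
    obtain ⟨μ, -, hμ⟩ := Multiset.mem_map.mp hc
    exact ⟨μ, hμ⟩
  -- primitive idempotents have singleton support
  have hsupp : ∀ g : Λ, IsPrimitiveIdempotent g →
      ∃ i : Fin n, π g = fun m => if m = i then 1 else 0 := by
    intro g hg
    have hεidem : ∀ m, π g m = 0 ∨ π g m = 1 := by
      intro m
      have h1 : π g m * π g m = π g m := by
        have := congrFun (show π g * π g = π g by rw [← map_mul, hg.1.eq]) m
        simpa using this
      rcases mul_eq_zero.mp (by rw [mul_sub, mul_one, h1, sub_self] :
          π g m * (π g m - 1) = 0) with h | h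
      · exact Or.inl h
      · exact Or.inr (sub_eq_zero.mp h)
    have hne : ∃ i, π g i = 1 := by
      by_contra h
      push_neg at h
      have hg0 : π g = 0 := funext fun m => (hεidem m).resolve_right (h m)
      exact hg.2.1 (aux_idem_jacobson_eq_zero hg.1 ((hmemJ g).mpr hg0))
    obtain ⟨i, hi⟩ := hne
    refine ⟨i, funext fun m => ?_⟩
    by_cases hmi : m = i
    · rw [if_pos hmi, hmi, hi]
    · rw [if_neg hmi]
      by_contra hm1
      have hm : π g m = 1 := (hεidem m).resolve_left hm1
      -- split g, contradicting primitivity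
      set ε₁ : Fin n → k := fun l => if l = i then 1 else 0 with hε₁def
      have hε₁ : IsIdempotentElem ε₁ := by
        funext l
        by_cases hl : l = i <;> simp [hε₁def, hl]
      obtain ⟨pre, hpre⟩ := hsurj ε₁
      have h1 : ε₁ * π (1 - g) = 0 := by
        funext l
        by_cases hl : l = i <;>
          simp [hε₁def, hl, map_sub, map_one, hi]
      have h2 : π (1 - g) * ε₁ = 0 := by
        funext l
        by_cases hl : l = i <;>
          simp [hε₁def, hl, map_sub, map_one, hi]
      obtain ⟨a, haid, hπa, hag, hga⟩ :=
        exists_isIdempotentElem_mul_eq_zero_of_ker_isNilpotent π hnil ε₁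
          ⟨pre, hpre⟩ hε₁ (1 - g) hg.1.one_sub h1 h2
      have hag' : a * g = a := by
        have := hag
        rw [mul_sub, mul_one, sub_eq_zero] at this
        exact this.symm
      have hga' : g * a = a := by
        have := hga
        rw [sub_mul, one_mul, sub_eq_zero] at this
        exact this.symm
      refine hg.2.2 ⟨a, g - a, haid, ?_, ?_, ?_, ?_, ?_, ?_⟩
      · show (g - a) * (g - a) = g - a
        rw [sub_mul, mul_sub, mul_sub, hg.1.eq, hga', hag', haid.eq, sub_self, sub_zero]
      · intro h0
        have := congrFun hπa i
        rw [h0, map_zero] at this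
        simp [hε₁def] at this
      · intro h0
        have h3 := congrFun (congrArg π h0) m
        rw [map_sub, map_zero] at h3
        have h4 := congrFun hπa m
        simp only [Pi.sub_apply, Pi.zero_apply] at h3
        rw [h4, hm] at h3
        simp [hε₁def, hmi] at h3
      · rw [mul_sub, hag', haid.eq, sub_self]
      · rw [sub_mul, hga', haid.eq, sub_self]
      · rw [add_sub_cancel]
  -- the key scalar lemma
  have hkey : ∀ g : Λ, IsPrimitiveIdempotent g → ∀ a : Λ, ∃ μ : k,
      a * g - μ • g ∈ Ideal.jacobson (⊥ : Ideal Λ) ∧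
      g * a - μ • g ∈ Ideal.jacobson (⊥ : Ideal Λ) := by
    intro g hg a
    obtain ⟨i, hi⟩ := hsupp g hg
    obtain ⟨μ, hμ⟩ := hsigma i (π a i)
    refine ⟨μ, ?_, ?_⟩ <;>
      [skip; skip] <;>
      · rw [hmemJ, map_sub, map_mul, Algebra.smul_def, map_mul]
        funext l
        by_cases hl : l = i <;>
          simp [hi, hl, hμ, mul_comm]
  -- scalar action on φ and ψ
  have heφ : e * φ = φ := by rw [hφ, ← mul_assoc, ← mul_assoc, he.1.eq]
  have heψ : e * ψ = ψ := by rw [hψ, ← mul_assoc, ← mul_assoc, he.1.eq]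
  have hφf : φ * f = φ := by rw [hφ, mul_assoc, mul_assoc, hf.1.eq, ← mul_assoc]
  have hψf : ψ * f = ψ := by rw [hψ, mul_assoc, mul_assoc, hf.1.eq, ← mul_assoc]
  have L1 : ∀ a : Λ, ∃ μ : k, a * φ = μ • φ ∧ a * ψ = μ • ψ := by
    intro a
    obtain ⟨μ, hμ1, -⟩ := hkey e he a
    obtain ⟨h1, h2, -, -⟩ := hJ _ hμ1
    rw [sub_mul, smul_mul_assoc, heφ, sub_eq_zero] at h1
    rw [sub_mul, smul_mul_assoc, heψ, sub_eq_zero] at h2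
    refine ⟨μ, ?_, ?_⟩
    · calc a * φ = a * (e * φ) := by rw [heφ]
        _ = a * e * φ := by rw [mul_assoc]
        _ = μ • φ := h1
    · calc a * ψ = a * (e * ψ) := by rw [heψ]
        _ = a * e * ψ := by rw [mul_assoc]
        _ = μ • ψ := h2
  have L2 : ∀ b : Λ, ∃ μ : k, φ * b = μ • φ ∧ ψ * b = μ • ψ := by
    intro b
    obtain ⟨μ, -, hμ2⟩ := hkey f hf b
    obtain ⟨-, -, h3, h4⟩ := hJ _ hμ2
    rw [mul_sub, mul_smul_comm, hφf, sub_eq_zero] at h3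
    rw [mul_sub, mul_smul_comm, hψf, sub_eq_zero] at h4
    refine ⟨μ, ?_, ?_⟩
    · calc φ * b = (φ * f) * b := by rw [hφf]
        _ = φ * (f * b) := by rw [mul_assoc]
        _ = μ • φ := h3
    · calc ψ * b = (ψ * f) * b := by rw [hψf]
        _ = ψ * (f * b) := by rw [mul_assoc]
        _ = μ • ψ := h4
  have HH : ∀ a b : Λ, ∃ c : k, a * φ * b = c • φ ∧ a * ψ * b = c • ψ := by
    intro a b
    obtain ⟨μ, hμφ, hμψ⟩ := L1 a
    obtain ⟨ν, hνφ, hνψ⟩ := L2 b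
    refine ⟨μ * ν, ?_, ?_⟩
    · rw [hμφ, smul_mul_assoc, hνφ, smul_smul]
    · rw [hμψ, smul_mul_assoc, hνψ, smul_smul]
  have Hφ : ∀ x, x ∈ idealGen φ ↔ ∃ c : k, x = c • φ :=
    idealGen_mem_iff' (fun a b => ⟨(HH a b).choose, (HH a b).choose_spec.1⟩)
  have Hψ : ∀ x, x ∈ idealGen ψ ↔ ∃ c : k, x = c • ψ :=
    idealGen_mem_iff' (fun a b => ⟨(HH a b).choose, (HH a b).choose_spec.2⟩)
  have Hθ : ∀ x, x ∈ idealGen (φ + ψ) ↔ ∃ c : k, x = c • (φ + ψ) := by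
    refine idealGen_mem_iff' (fun a b => ?_)
    obtain ⟨c, h1, h2⟩ := HH a b
    exact ⟨c, by rw [mul_add, add_mul, h1, h2, smul_add]⟩
  have hind : ∀ s t : k, s • φ + t • ψ = 0 → s = 0 ∧ t = 0 :=
    LinearIndependent.pair_iff.mp hli
  have hφ0 : φ ≠ 0 := by
    intro h
    have := (hind 1 0 (by rw [h, smul_zero, zero_smul, add_zero])).1
    exact one_ne_zero this
  have hmemφφ : φ ∈ idealGen φ := (Hφ φ).mpr ⟨1, (one_smul k φ).symm⟩
  have hmemψψ : ψ ∈ idealGen ψ := (Hψ ψ).mpr ⟨1, (one_smul k ψ).symm⟩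
  have hmemθθ : φ + ψ ∈ idealGen (φ + ψ) := (Hθ _).mpr ⟨1, (one_smul k _).symm⟩
  have hinfθφ : idealGen (φ + ψ) ⊓ idealGen φ = ⊥ := by
    rw [eq_bot_iff]
    intro x hx
    obtain ⟨c, hc⟩ := (Hθ x).mp hx.1
    obtain ⟨d, hd⟩ := (Hφ x).mp hx.2
    rw [smul_add] at hc
    have h0 : (c - d) • φ + c • ψ = 0 :=
      calc (c - d) • φ + c • ψ = (c • φ + c • ψ) - d • φ := by rw [sub_smul]; abel
        _ = 0 := by rw [← hc, ← hd, sub_self]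
    have hc0 := (hind _ _ h0).2
    rw [Submodule.mem_bot, hc, hc0, zero_smul, zero_smul, add_zero]
  have hinfφψ : idealGen φ ⊓ idealGen ψ = ⊥ := by
    rw [eq_bot_iff]
    intro x hx
    obtain ⟨c, hc⟩ := (Hφ x).mp hx.1
    obtain ⟨d, hd⟩ := (Hψ x).mp hx.2
    have h0 : c • φ + (-d) • ψ = 0 :=
      calc c • φ + (-d) • ψ = c • φ - d • ψ := by rw [neg_smul]; abel
        _ = 0 := by rw [← hc, ← hd, sub_self]
    rw [Submodule.mem_bot, hc, (hind _ _ h0).1, zero_smul]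
  refine ⟨⟨?_, ?_, ?_⟩, ⟨hinfφψ, ?_, hinfθφ⟩, ⟨?_, ?_⟩, ?_⟩
  · -- idealGen φ ≠ idealGen ψ
    intro h
    obtain ⟨c, hc⟩ := (Hψ φ).mp (h ▸ hmemφφ)
    have := (hind 1 (-c) (by rw [one_smul, neg_smul, ← hc, add_neg_cancel])).1
    exact one_ne_zero this
  · -- idealGen ψ ≠ idealGen (φ+ψ)
    intro h
    obtain ⟨c, hc⟩ := (Hθ ψ).mp (h ▸ hmemψψ)
    rw [smul_add] at hc
    have h0 : c • φ + (c - 1) • ψ = 0 :=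
      calc c • φ + (c - 1) • ψ = (c • φ + c • ψ) - ψ := by rw [sub_smul, one_smul]; abel
        _ = 0 := sub_eq_zero_of_eq hc.symm
    obtain ⟨h1, h2⟩ := hind _ _ h0
    rw [h1, zero_sub] at h2
    exact one_ne_zero (neg_eq_zero.mp h2)
  · -- idealGen (φ+ψ) ≠ idealGen φ
    intro h
    obtain ⟨c, hc⟩ := (Hφ (φ + ψ)).mp (h ▸ hmemθθ)
    have h0 : (c - 1) • φ + (-1 : k) • ψ = 0 :=
      calc (c - 1) • φ + (-1 : k) • ψ = c • φ - (φ + ψ) := by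
            rw [sub_smul, one_smul, neg_smul, one_smul]; abel
        _ = 0 := sub_eq_zero_of_eq hc.symm
    exact one_ne_zero (neg_eq_zero.mp (hind _ _ h0).2)
  · -- inf ψ θ
    rw [eq_bot_iff]
    intro x hx
    obtain ⟨c, hc⟩ := (Hψ x).mp hx.1
    obtain ⟨d, hd⟩ := (Hθ x).mp hx.2
    rw [smul_add] at hd
    have h0 : d • φ + (d - c) • ψ = 0 :=
      calc d • φ + (d - c) • ψ = (d • φ + d • ψ) - c • ψ := by rw [sub_smul]; abel
        _ = 0 := by rw [← hd, ← hc, sub_self]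
    have hd0 := (hind _ _ h0).1
    rw [Submodule.mem_bot, hd, hd0, zero_smul, zero_smul, add_zero]
  · -- sup φ ψ = sup ψ θ
    apply le_antisymm
    · refine sup_le ?_ le_sup_left
      intro x hx
      obtain ⟨c, hc⟩ := (Hφ x).mp hx
      refine Submodule.mem_sup.mpr ⟨(-c) • ψ, (Hψ _).mpr ⟨-c, rfl⟩,
        c • (φ + ψ), (Hθ _).mpr ⟨c, rfl⟩, ?_⟩
      rw [hc, smul_add, neg_smul]; abel
    · refine sup_le le_sup_right ?_
      intro x hx
      obtain ⟨c, hc⟩ := (Hθ x).mp hx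
      refine Submodule.mem_sup.mpr ⟨c • φ, (Hφ _).mpr ⟨c, rfl⟩,
        c • ψ, (Hψ _).mpr ⟨c, rfl⟩, ?_⟩
      rw [hc, smul_add]
  · -- sup ψ θ = sup θ φ
    apply le_antisymm
    · refine sup_le ?_ le_sup_left
      intro x hx
      obtain ⟨c, hc⟩ := (Hψ x).mp hx
      refine Submodule.mem_sup.mpr ⟨c • (φ + ψ), (Hθ _).mpr ⟨c, rfl⟩,
        (-c) • φ, (Hφ _).mpr ⟨-c, rfl⟩, ?_⟩
      rw [hc, smul_add, neg_smul]; abel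
    · refine sup_le le_sup_right ?_
      intro x hx
      obtain ⟨c, hc⟩ := (Hφ x).mp hx
      refine Submodule.mem_sup.mpr ⟨(-c) • ψ, (Hψ _).mpr ⟨-c, rfl⟩,
        c • (φ + ψ), (Hθ _).mpr ⟨c, rfl⟩, ?_⟩
      rw [hc, smul_add, neg_smul]; abel
  · -- nondistributivity
    intro h
    have hmem : φ ∈ idealGen φ ⊓ (idealGen ψ ⊔ idealGen (φ + ψ)) := by
      refine ⟨hmemφφ, Submodule.mem_sup.mpr ⟨(-1 : k) • ψ, (Hψ _).mpr ⟨-1, rfl⟩,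
        (1 : k) • (φ + ψ), (Hθ _).mpr ⟨1, rfl⟩, ?_⟩⟩
      rw [neg_smul, one_smul, one_smul]; abel
    rw [h] at hmem
    have hbot : (idealGen φ ⊓ idealGen ψ) ⊔ (idealGen φ ⊓ idealGen (φ + ψ)) = ⊥ := by
      rw [hinfφψ, inf_comm, hinfθφ, sup_idem]
    rw [hbot, Submodule.mem_bot] at hmem
    exact hφ0 hmem
end

section
/- If M' ⊆ M is a uniform inclusion of finite-length Λ-modules and M' is accessible, then M is accessible. -/
universe u v

/-- Accessible modules, defined inductively: simple modules are accessible, and an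
indecomposable module is accessible provided it has a maximal submodule (i.e. a
submodule of length one less) which is accessible, or a simple submodule whose
quotient (a factor module of length one less) is accessible. -/
inductive Accessible (Λ : Type u) [Ring Λ] : (M : Type v) → [AddCommGroup M] → [Module Λ M] → Prop where
  | of_simple {M : Type v} [AddCommGroup M] [Module Λ M] :
      IsSimpleModule Λ M → Accessible Λ M
  | of_submodule {M : Type v} [AddCommGroup M] [Module Λ M] (N : Submodule Λ M) :
      Indec Λ M → IsCoatom N → Accessible Λ N → Accessible Λ M
  | of_quotient {M : Type v} [AddCommGroup M] [Module Λ M] (N : Submodule Λ M) :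
      Indec Λ M → IsAtom N → Accessible Λ (M ⧸ N) → Accessible Λ M

lemma indec_congr {Λ : Type u} [Ring Λ] {M N : Type v} [AddCommGroup M] [Module Λ M]
    [AddCommGroup N] [Module Λ N] (e : M ≃ₗ[Λ] N) (h : Indec Λ M) : Indec Λ N := by
  obtain ⟨hnt, hc⟩ := h
  haveI := hnt
  refine ⟨e.symm.toEquiv.nontrivial, fun A B hAB => ?_⟩
  let f : Submodule Λ M ≃o Submodule Λ N := Submodule.orderIsoMapComap e
  have h2 := hc (f.symm A) (f.symm B) (f.symm.isCompl hAB)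
  rcases h2 with h | h
  · left
    have := congrArg f h
    rwa [f.apply_symm_apply, map_bot] at this
  · right
    have := congrArg f h
    rwa [f.apply_symm_apply, map_bot] at this

lemma Accessible.congr {Λ : Type u} [Ring Λ] {M : Type v} [AddCommGroup M] [Module Λ M]
    (h : Accessible Λ M) : ∀ {N : Type v} [AddCommGroup N] [Module Λ N],
      (M ≃ₗ[Λ] N) → Accessible Λ N := by
  induction h with
  | of_simple hs =>
    intro N _ _ e
    haveI := hs
    exact .of_simple (IsSimpleModule.congr e.symm)
  | of_submodule N' hin hco _ ih =>
    intro N _ _ e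
    let f : Submodule Λ _ ≃o Submodule Λ N := Submodule.orderIsoMapComap e
    refine .of_submodule (N'.map (e : _ →ₗ[Λ] N)) (indec_congr e hin) ?_ (ih (e.submoduleMap N'))
    exact (f.isCoatom_iff N').mpr hco
  | of_quotient N' hin hat _ ih =>
    intro N _ _ e
    let f : Submodule Λ _ ≃o Submodule Λ N := Submodule.orderIsoMapComap e
    refine .of_quotient (N'.map (e : _ →ₗ[Λ] N)) (indec_congr e hin) (by rw [← Submodule.orderIsoMapComap_apply]; exact (f.isAtom_iff N').mpr hat) ?_
    exact ih (Submodule.Quotient.equiv N' _ e rfl)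


/-- If `M' ⊆ M` is a uniform inclusion (every submodule `U` with `M' ⊆ U ⊆ M` is
indecomposable) of finite-length modules and `M'` is accessible, then `M` is
accessible. -/
theorem accessible_of_uniform_inclusion
    (Λ : Type u) [Ring Λ] (M : Type v) [AddCommGroup M] [Module Λ M]
    (hfl : IsFiniteLength Λ M)
    (M' : Submodule Λ M)
    (huniform : ∀ U : Submodule Λ M, M' ≤ U → Indec Λ U)
    (hacc : Accessible Λ M') :
    Accessible Λ M := by
  obtain ⟨hnoe, hart⟩ := isFiniteLength_iff_isNoetherian_isArtinian.mp hfl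
  suffices H : ∀ U : Submodule Λ M, M' ≤ U → Accessible Λ U by
    exact (H ⊤ le_top).congr Submodule.topEquiv
  intro U
  induction U using WellFoundedLT.induction with
  | ind U IH =>
    intro hM'U
    rcases eq_or_lt_of_le hM'U with rfl | hlt
    · exact hacc.congr (LinearEquiv.refl Λ _)
    · -- find W with M' ≤ W ⋖ U
      obtain ⟨W, ⟨hM'W, hWU⟩, hmax⟩ :=
        set_has_maximal_iff_noetherian.mpr hnoe {V | M' ≤ V ∧ V < U} ⟨M', le_rfl, hlt⟩
      have hcov : W ⋖ U := ⟨hWU, fun V hWV hVU => hmax V ⟨hM'W.trans hWV.le, hVU⟩ hWV⟩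
      set W' : Submodule Λ U := W.comap U.subtype with hW'
      have hmapW : W'.map U.subtype = W := by
        rw [hW', Submodule.map_comap_subtype]
        exact inf_eq_right.mpr hcov.lt.le
      have hco : IsCoatom W' := by
        constructor
        · intro htop
          rw [htop, Submodule.map_subtype_top] at hmapW
          exact hWU.ne' hmapW
        · intro V' hV'
          have h1 : W < V'.map U.subtype := by
            rw [← hmapW]
            exact Submodule.map_strictMono_of_injective U.injective_subtype hV'
          have h2 : V'.map U.subtype ≤ U := Submodule.map_subtype_le U V'
          have h3 : V'.map U.subtype = U := by
            rcases h2.lt_or_eq with h | h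
            · exact absurd h (hcov.2 h1)
            · exact h
          apply Submodule.map_injective_of_injective U.injective_subtype
          rw [h3, Submodule.map_subtype_top]
      have haccW : Accessible Λ W' :=
        (IH W hcov.lt (hM'W)).congr (Submodule.comapSubtypeEquivOfLe hcov.lt.le).symm
      exact .of_submodule W' (huniform U hM'U) hco haccW
end

section
/- Let B = k⟨φ, ψ⟩/(φ², ψ², φψ, ψφ) be the 3-dimensional local algebra with basis 1, φ, ψ and square-zero radical, and let V be a B-module with elements x, y and u such that φx = 0, ψx = φy = u ≠ 0, ψy = 0. In V^n (with copies indexed 1..n), set z_i = y_(i) + x_(i+1) for 1 ≤ i ≤ n−1. Then the B-submodule N = Σ_{i=1}^{n−1} B z_i of V^n has k-basis {z₁,…,z_{n−1}, u_(1),…,u_(n)}, its socle equals Σ_{i=1}^n k u_(i), and N is an indecomposable B-module of length 2n−1. -/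
/-- The length of a module, as the Krull dimension of its submodule lattice. -/
noncomputable def moduleLength (Λ : Type*) [Ring Λ] (M : Type*) [AddCommGroup M]
    [Module Λ M] : WithBot ℕ∞ :=
  Order.krullDim (Submodule Λ M)

/-- If a set `X` is stable (into its `k`-span) under the actions of `φ` and `ψ`, and every
element of `B` is a `k`-combination of `1, φ, ψ`, then the `B`-span of `X` is contained in
the `k`-span of `X`. -/
lemma aux_span_B_le_span_k {k B M : Type*} [Field k] [CommRing B] [Algebra k B]
    [AddCommGroup M] [Module B M] [Module k M] [IsScalarTower k B M] (φ ψ : B)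
    (hdec : ∀ b : B, ∃ a c d : k, b = a • (1:B) + c • φ + d • ψ)
    (X : Set M)
    (hφX : ∀ v ∈ X, φ • v ∈ Submodule.span k X)
    (hψX : ∀ v ∈ X, ψ • v ∈ Submodule.span k X) :
    ∀ v ∈ Submodule.span B X, v ∈ Submodule.span k X := by
  set P := Submodule.span k X with hP
  have mkL : ∀ b : B, ∃ L : M →ₗ[k] M, ∀ v, L v = b • v := by
    intro b
    exact ⟨{ toFun := fun v => b • v
             map_add' := fun v w => smul_add b v w
             map_smul' := fun a v => (smul_comm a b v).symm }, fun v => rfl⟩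
  have stabP : ∀ (b : B), (∀ v ∈ X, b • v ∈ P) → ∀ v ∈ P, b • v ∈ P := by
    intro b hb v hv
    obtain ⟨L, hL⟩ := mkL b
    have h1 : P.map L ≤ P := by
      rw [hP, Submodule.map_span, Submodule.span_le]
      rintro _ ⟨w, hw, rfl⟩
      rw [hL]
      exact hb w hw
    rw [← hL]
    exact h1 (Submodule.mem_map_of_mem hv)
  have hφP : ∀ v ∈ P, φ • v ∈ P := stabP φ hφX
  have hψP : ∀ v ∈ P, ψ • v ∈ P := stabP ψ hψX
  let P' : Submodule B M :=
    { carrier := P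
      add_mem' := fun h1 h2 => P.add_mem h1 h2
      zero_mem' := P.zero_mem
      smul_mem' := by
        intro b v hv
        obtain ⟨a, c, d, rfl⟩ := hdec b
        show (_ • v) ∈ P
        rw [add_smul, add_smul, smul_assoc, one_smul, smul_assoc, smul_assoc]
        exact P.add_mem (P.add_mem (P.smul_mem a hv) (P.smul_mem c (hφP v hv)))
          (P.smul_mem d (hψP v hv)) }
  intro v hv
  have hle : Submodule.span B X ≤ P' :=
    Submodule.span_le.2 (fun w hw => Submodule.subset_span hw)
  exact hle hv

/-- A strictly monotone function `Fin (l+1) → ℕ` bounded by `D` forces `l ≤ D`. -/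
lemma aux_strictmono_fin_le {l D : ℕ} (f : Fin (l+1) → ℕ) (hf : StrictMono f)
    (hD : ∀ i, f i ≤ D) : l ≤ D := by
  have h : ∀ j : ℕ, ∀ h : j < l+1, j ≤ f ⟨j, h⟩ := by
    intro j
    induction j with
    | zero => intro h; exact Nat.zero_le _
    | succ j ih =>
      intro h
      have h1 := ih (by omega)
      have hlt : f ⟨j, by omega⟩ < f ⟨j+1, h⟩ := hf (by simp [Fin.lt_def])
      omega
  exact le_trans (h l (by omega)) (hD _)

/-- Inclusion `Fin (n-1) → Fin n`. -/
def cstF (n : ℕ) : Fin (n-1) → Fin n := Fin.castLE (Nat.sub_le n 1)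

/-- Shifted inclusion `Fin (n-1) → Fin n`. -/
def sucF (n : ℕ) : Fin (n-1) → Fin n := fun i => ⟨i.1+1, by have := i.2; omega⟩

lemma cstF_val (n : ℕ) (i : Fin (n-1)) : (cstF n i).1 = i.1 := rfl
lemma sucF_val (n : ℕ) (i : Fin (n-1)) : (sucF n i).1 = i.1 + 1 := rfl

lemma cstF_inj (n : ℕ) : Function.Injective (cstF n) := fun a b h =>
  Fin.ext (by have := congrArg Fin.val h; simpa [cstF_val] using this)

lemma sucF_inj (n : ℕ) : Function.Injective (sucF n) := fun a b h =>
  Fin.ext (by have := congrArg Fin.val h; simp only [sucF_val] at this; omega)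

/-- Position of a basis index in the chain ordering: the `u`'s first, then the `z`'s. -/
def posF (n : ℕ) : (Fin (n-1) ⊕ Fin n) → ℕ := Sum.elim (fun i => n + i.1) (fun j => j.1)

lemma posF_inl (n : ℕ) (i : Fin (n-1)) : posF n (Sum.inl i) = n + i.1 := rfl
lemma posF_inr (n : ℕ) (j : Fin n) : posF n (Sum.inr j) = j.1 := rfl

/-- Let `B = k⟨φ,ψ⟩/(φ²,ψ²,φψ,ψφ)` be the 3-dimensional local algebra with basis
`1, φ, ψ` and square-zero radical, and `V` a `B`-module with elements `x, y, u`
satisfying `φx = 0`, `ψx = φy = u ≠ 0`, `ψy = 0`.  In `V^n` put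
`z_i = y_(i) + x_(i+1)` for `1 ≤ i ≤ n−1`.  Then `N = Σᵢ B·z_i ⊆ V^n` has `k`-basis
`{z₁,…,z_{n−1}, u_(1),…,u_(n)}`, its socle is `Σᵢ k·u_(i)` (the span of the `u_(i)`),
and `N` is an indecomposable `B`-module of length `2n−1`. -/
theorem preprojective_submodule_structure
    (k : Type*) [Field k] (B : Type*) [CommRing B] [Algebra k B]
    (φ ψ : B)
    (hbasis : LinearIndependent k ![(1 : B), φ, ψ] ∧
      Submodule.span k ({1, φ, ψ} : Set B) = ⊤)
    (hφφ : φ * φ = 0) (hψψ : ψ * ψ = 0) (hφψ : φ * ψ = 0)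
    (V : Type*) [AddCommGroup V] [Module B V] [Module k V] [IsScalarTower k B V]
    (x y u : V)
    (hx : φ • x = 0) (hu₁ : ψ • x = u) (hu₂ : φ • y = u) (hu : u ≠ 0) (hy : ψ • y = 0)
    (n : ℕ) (hn : 2 ≤ n)
    (z : Fin (n - 1) → (Fin n → V))
    (hz : ∀ i : Fin (n - 1),
      z i = Pi.single (Fin.castLE (Nat.sub_le n 1) i) y +
            Pi.single (⟨i.1 + 1, by omega⟩ : Fin n) x)
    (usingle : Fin n → (Fin n → V))
    (husingle : ∀ i, usingle i = Pi.single i u)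
    (N : Submodule B (Fin n → V)) (hN : N = Submodule.span B (Set.range z)) :
    -- k-basis {z₁,…,z_{n−1}, u_(1),…,u_(n)}
    (LinearIndependent k (Sum.elim z usingle) ∧
      Submodule.restrictScalars k N = Submodule.span k (Set.range (Sum.elim z usingle))) ∧
    -- socle of N is Σᵢ k·u_(i)
    sSup {S : Submodule B (Fin n → V) | IsAtom S ∧ S ≤ N} =
      Submodule.span B (Set.range usingle) ∧
    -- N is indecomposable of length 2n−1
    Indec B N ∧ moduleLength B N = ((2 * n - 1 : ℕ) : ℕ∞) := by
  classical
  obtain ⟨hli3, hsp3⟩ := hbasis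
  -- decomposition of scalars
  have bdec : ∀ b : B, ∃ a c d : k, b = a • (1:B) + c • φ + d • ψ := by
    intro b
    have hb : b ∈ Submodule.span k ({1, φ, ψ} : Set B) := hsp3 ▸ Submodule.mem_top
    rw [Submodule.mem_span_insert] at hb
    obtain ⟨a, w, hw, rfl⟩ := hb
    rw [Submodule.mem_span_insert] at hw
    obtain ⟨c, w2, hw2, rfl⟩ := hw
    rw [Submodule.mem_span_singleton] at hw2
    obtain ⟨d, rfl⟩ := hw2
    exact ⟨a, c, d, by rw [add_assoc]⟩
  have hz' : ∀ i, z i = Pi.single (cstF n i) y + Pi.single (sucF n i) x := hz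
  -- smul on singles
  have hsingle_smul : ∀ (b : B) (j : Fin n) (v : V),
      b • (Pi.single j v : Fin n → V) = Pi.single j (b • v) := by
    intro b j v
    funext p
    by_cases h : p = j <;> simp [Pi.single_apply, h]
  have hφu : φ • u = 0 := by rw [← hu₂, ← mul_smul, hφφ, zero_smul]
  have hψu : ψ • u = 0 := by rw [← hu₂, ← mul_smul, mul_comm, hφψ, zero_smul]
  have hφz : ∀ i, φ • z i = usingle (cstF n i) := by
    intro i
    rw [hz' i, smul_add, hsingle_smul, hsingle_smul, hu₂, hx, husingle]
    simp
  have hψz : ∀ i, ψ • z i = usingle (sucF n i) := by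
    intro i
    rw [hz' i, smul_add, hsingle_smul, hsingle_smul, hy, hu₁, husingle]
    simp
  have hφus : ∀ j, φ • usingle j = 0 := by
    intro j; rw [husingle j, hsingle_smul, hφu]; simp
  have hψus : ∀ j, ψ • usingle j = 0 := by
    intro j; rw [husingle j, hsingle_smul, hψu]; simp
  -- cancellation
  have kcancel : ∀ a : k, a • u = 0 → a = 0 := by
    intro a ha
    by_contra h
    exact hu (by rw [← inv_smul_smul₀ h u, ha, smul_zero])
  have kcancel2 : ∀ a b : k, a • u = b • u → a = b := by
    intro a b hab
    have h1 : (a - b) • u = 0 := by rw [sub_smul, hab, sub_self]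
    exact sub_eq_zero.1 (kcancel _ h1)
  -- evaluation of sums of u-singles
  have evalz : ∀ (w : Fin (n-1) → k) (e : Fin (n-1) → Fin n), Function.Injective e →
      ∀ i₀, (∑ i, w i • usingle (e i)) (e i₀) = w i₀ • u := by
    intro w e he i₀
    rw [Finset.sum_apply]
    rw [Finset.sum_eq_single i₀]
    · rw [Pi.smul_apply, husingle, Pi.single_eq_same]
    · intro i _ hne
      rw [Pi.smul_apply, husingle, Pi.single_apply, if_neg (fun hh => hne (he hh).symm), smul_zero]
    · intro habs; exact absurd (Finset.mem_univ i₀) habs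
  have evalznot : ∀ (w : Fin (n-1) → k) (e : Fin (n-1) → Fin n) (p : Fin n),
      (∀ i, e i ≠ p) → (∑ i, w i • usingle (e i)) p = 0 := by
    intro w e p hp
    rw [Finset.sum_apply]
    apply Finset.sum_eq_zero
    intro i _
    rw [Pi.smul_apply, husingle, Pi.single_apply, if_neg (fun hh => hp i hh.symm), smul_zero]
  have evalu : ∀ (w : Fin n → k) (p : Fin n), (∑ j, w j • usingle j) p = w p • u := by
    intro w p
    rw [Finset.sum_apply]
    rw [Finset.sum_eq_single p]
    · rw [Pi.smul_apply, husingle, Pi.single_eq_same]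
    · intro j _ hne
      rw [Pi.smul_apply, husingle, Pi.single_apply, if_neg (Ne.symm hne), smul_zero]
    · intro habs; exact absurd (Finset.mem_univ p) habs
  -- pulling φ, ψ through k-linear combinations
  have hφsum : ∀ (g : (Fin (n-1) ⊕ Fin n) → k),
      φ • (∑ t, g t • Sum.elim z usingle t) = ∑ i, g (Sum.inl i) • usingle (cstF n i) := by
    intro g
    rw [Finset.smul_sum, Fintype.sum_sum_type]
    have h1 : ∀ i : Fin (n-1), φ • (g (Sum.inl i) • Sum.elim z usingle (Sum.inl i))
        = g (Sum.inl i) • usingle (cstF n i) := by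
      intro i; rw [Sum.elim_inl, smul_comm, hφz]
    have h2 : ∀ j : Fin n, φ • (g (Sum.inr j) • Sum.elim z usingle (Sum.inr j)) = 0 := by
      intro j; rw [Sum.elim_inr, smul_comm, hφus, smul_zero]
    rw [Finset.sum_congr rfl (fun i _ => h1 i), Finset.sum_congr rfl (fun j _ => h2 j),
      Finset.sum_const_zero, add_zero]
  have hψsum : ∀ (g : (Fin (n-1) ⊕ Fin n) → k),
      ψ • (∑ t, g t • Sum.elim z usingle t) = ∑ i, g (Sum.inl i) • usingle (sucF n i) := by
    intro g
    rw [Finset.smul_sum, Fintype.sum_sum_type]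
    have h1 : ∀ i : Fin (n-1), ψ • (g (Sum.inl i) • Sum.elim z usingle (Sum.inl i))
        = g (Sum.inl i) • usingle (sucF n i) := by
      intro i; rw [Sum.elim_inl, smul_comm, hψz]
    have h2 : ∀ j : Fin n, ψ • (g (Sum.inr j) • Sum.elim z usingle (Sum.inr j)) = 0 := by
      intro j; rw [Sum.elim_inr, smul_comm, hψus, smul_zero]
    rw [Finset.sum_congr rfl (fun i _ => h1 i), Finset.sum_congr rfl (fun j _ => h2 j),
      Finset.sum_const_zero, add_zero]
  -- linear independence
  have hLI : LinearIndependent k (Sum.elim z usingle) := by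
    rw [Fintype.linearIndependent_iff]
    intro g hg
    have hgz : ∀ i, g (Sum.inl i) = 0 := by
      intro i₀
      have h1 : ∑ i, g (Sum.inl i) • usingle (cstF n i) = 0 := by
        rw [← hφsum g, hg, smul_zero]
      apply kcancel
      rw [← evalz (fun i => g (Sum.inl i)) (cstF n) (cstF_inj n) i₀, h1]
      rfl
    have hgu : ∀ j, g (Sum.inr j) = 0 := by
      intro j₀
      have h1 : ∑ j, g (Sum.inr j) • usingle j = 0 := by
        rw [Fintype.sum_sum_type] at hg
        have h2 : ∑ i, g (Sum.inl i) • Sum.elim z usingle (Sum.inl i) = 0 := by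
          apply Finset.sum_eq_zero
          intro i _
          rw [hgz i, zero_smul]
        rw [h2, zero_add] at hg
        exact hg
      apply kcancel
      rw [← evalu (fun j => g (Sum.inr j)) j₀, h1]
      rfl
    intro t
    cases t with
    | inl i => exact hgz i
    | inr j => exact hgu j
  -- membership of generators in N
  have hzmem : ∀ i, z i ∈ N := fun i => hN ▸ Submodule.subset_span ⟨i, rfl⟩
  have humem : ∀ j, usingle j ∈ N := by
    intro j
    by_cases h : j.1 < n - 1
    · have hc : cstF n ⟨j.1, h⟩ = j := Fin.ext rfl
      have h1 : usingle j = φ • z ⟨j.1, h⟩ := by rw [hφz, hc]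
      rw [h1]; exact N.smul_mem φ (hzmem _)
    · have hc : sucF n ⟨n-2, by omega⟩ = j := by
        apply Fin.ext
        show n - 2 + 1 = j.1
        have := j.2
        omega
      have h1 : usingle j = ψ • z ⟨n-2, by omega⟩ := by rw [hψz, hc]
      rw [h1]; exact N.smul_mem ψ (hzmem _)
  -- the span equality over k
  have hstab_univ : ∀ v ∈ Submodule.span B (Set.range (Sum.elim z usingle)),
      v ∈ Submodule.span k (Set.range (Sum.elim z usingle)) := by
    apply aux_span_B_le_span_k φ ψ bdec
    · rintro _ ⟨t, rfl⟩
      cases t with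
      | inl i =>
        rw [Sum.elim_inl, hφz]
        exact Submodule.subset_span ⟨Sum.inr (cstF n i), rfl⟩
      | inr j =>
        rw [Sum.elim_inr, hφus]
        exact Submodule.zero_mem _
    · rintro _ ⟨t, rfl⟩
      cases t with
      | inl i =>
        rw [Sum.elim_inl, hψz]
        exact Submodule.subset_span ⟨Sum.inr (sucF n i), rfl⟩
      | inr j =>
        rw [Sum.elim_inr, hψus]
        exact Submodule.zero_mem _
  have hspan_eq : Submodule.restrictScalars k N
      = Submodule.span k (Set.range (Sum.elim z usingle)) := by
    apply le_antisymm
    · intro v hv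
      have hv' : v ∈ Submodule.span B (Set.range (Sum.elim z usingle)) := by
        have h1 : N ≤ Submodule.span B (Set.range (Sum.elim z usingle)) := by
          rw [hN]
          apply Submodule.span_mono
          rintro _ ⟨i, rfl⟩
          exact ⟨Sum.inl i, rfl⟩
        exact h1 hv
      exact hstab_univ v hv'
    · rw [Submodule.span_le]
      rintro _ ⟨t, rfl⟩
      cases t with
      | inl i => exact hzmem i
      | inr j => exact humem j
  have husne : ∀ j, usingle j ≠ 0 := by
    intro j h
    apply hu
    have h1 := congrFun h j
    rw [husingle, Pi.single_eq_same] at h1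
    exact h1
  have hatom : ∀ j, IsAtom (Submodule.span B {usingle j}) := by
    intro j
    constructor
    · rw [Ne, Submodule.span_singleton_eq_bot]
      exact husne j
    · intro S hS
      by_contra hSbot
      obtain ⟨v, hvS, hvne⟩ := (Submodule.ne_bot_iff S).1 hSbot
      have hv2 : v ∈ Submodule.span B {usingle j} := hS.le hvS
      rw [Submodule.mem_span_singleton] at hv2
      obtain ⟨b, hb⟩ := hv2
      obtain ⟨a, c, d, rfl⟩ := bdec b
      rw [add_smul, add_smul, smul_assoc, one_smul, smul_assoc, smul_assoc, hφus, hψus,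
        smul_zero, smul_zero, add_zero, add_zero] at hb
      have ha : a ≠ 0 := by rintro rfl; rw [zero_smul] at hb; exact hvne hb.symm
      have hmem : usingle j ∈ S := by
        have h1 : (algebraMap k B a⁻¹) • v ∈ S := S.smul_mem _ hvS
        rw [algebraMap_smul, ← hb, inv_smul_smul₀ ha] at h1
        exact h1
      have h2 : Submodule.span B {usingle j} ≤ S :=
        (Submodule.span_singleton_le_iff_mem _ _).2 hmem
      exact absurd (lt_of_lt_of_le hS h2) (lt_irrefl S)
  have hkill : ∀ (S : Submodule B (Fin n → V)), IsAtom S → ∀ ρ : B, ρ * ρ = 0 →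
      ∀ v ∈ S, ρ • v = 0 := by
    intro S hSatom ρ hρ v hv
    have hmapS : S.map (LinearMap.lsmul B (Fin n → V) ρ) ≤ S := by
      intro w hw
      obtain ⟨w', hw', rfl⟩ := Submodule.mem_map.1 hw
      exact S.smul_mem ρ hw'
    by_cases hmap : S.map (LinearMap.lsmul B (Fin n → V) ρ) = S
    · exfalso
      have h2 : S.map ((LinearMap.lsmul B (Fin n → V) ρ) ∘ₗ (LinearMap.lsmul B (Fin n → V) ρ))
          = S := by
        rw [Submodule.map_comp, hmap, hmap]
      have h3 : ((LinearMap.lsmul B (Fin n → V) ρ) ∘ₗ (LinearMap.lsmul B (Fin n → V) ρ))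
          = (0 : (Fin n → V) →ₗ[B] (Fin n → V)) := by
        apply LinearMap.ext
        intro w
        show ρ • ρ • w = 0
        rw [← mul_smul, hρ, zero_smul]
      rw [h3, Submodule.map_zero] at h2
      exact hSatom.1 h2.symm
    · have h4 : S.map (LinearMap.lsmul B (Fin n → V) ρ) = ⊥ :=
        hSatom.2 _ (lt_of_le_of_ne hmapS hmap)
      have h5 : ρ • v ∈ (⊥ : Submodule B (Fin n → V)) :=
        h4 ▸ Submodule.mem_map_of_mem hv
      simpa using h5
  have hker : ∀ v, v ∈ N → φ • v = 0 → v ∈ Submodule.span B (Set.range usingle) := by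
    intro v hvN hφv
    have hvk : v ∈ Submodule.span k (Set.range (Sum.elim z usingle)) := by
      rw [← hspan_eq]; exact hvN
    obtain ⟨cf, hcf⟩ := (Submodule.mem_span_range_iff_exists_fun k).1 hvk
    have hcz : ∀ i, cf (Sum.inl i) = 0 := by
      intro i₀
      have h1 : ∑ i, cf (Sum.inl i) • usingle (cstF n i) = 0 := by
        rw [← hφsum cf, hcf, hφv]
      apply kcancel
      rw [← evalz (fun i => cf (Sum.inl i)) (cstF n) (cstF_inj n) i₀, h1]
      rfl
    have hvrep : v = ∑ j, cf (Sum.inr j) • usingle j := by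
      rw [← hcf, Fintype.sum_sum_type]
      have h2 : ∑ i, cf (Sum.inl i) • Sum.elim z usingle (Sum.inl i) = 0 :=
        Finset.sum_eq_zero (fun i _ => by rw [hcz i, zero_smul])
      rw [h2, zero_add]
      rfl
    rw [hvrep]
    apply Submodule.sum_mem
    intro j _
    rw [show cf (Sum.inr j) • usingle j = (algebraMap k B (cf (Sum.inr j))) • usingle j from
      (algebraMap_smul B _ _).symm]
    exact Submodule.smul_mem _ _ (Submodule.subset_span ⟨j, rfl⟩)
  have hsocle : sSup {S : Submodule B (Fin n → V) | IsAtom S ∧ S ≤ N}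
      = Submodule.span B (Set.range usingle) := by
    apply le_antisymm
    · apply sSup_le
      rintro S ⟨hSatom, hSN⟩
      intro v hv
      exact hker v (hSN hv) (hkill S hSatom φ hφφ v hv)
    · rw [Submodule.span_range_eq_iSup]
      apply iSup_le
      intro j
      apply le_sSup
      refine ⟨hatom j, ?_⟩
      exact (Submodule.span_singleton_le_iff_mem _ _).2 (humem j)
  -- ### Indecomposability ###
  have husne0 : usingle ⟨0, by omega⟩ ≠ 0 := husne _
  have hNnontriv : Nontrivial ↥N := by
    refine ⟨⟨usingle ⟨0, by omega⟩, humem _⟩, 0, ?_⟩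
    intro hcontr
    exact husne0 (congrArg Subtype.val hcontr)
  have hstab_u : ∀ v ∈ Submodule.span B (Set.range usingle),
      v ∈ Submodule.span k (Set.range usingle) := by
    apply aux_span_B_le_span_k φ ψ bdec
    · rintro _ ⟨j, rfl⟩; rw [hφus]; exact Submodule.zero_mem _
    · rintro _ ⟨j, rfl⟩; rw [hψus]; exact Submodule.zero_mem _
  have hIndec : Indec B ↥N := by
    refine ⟨hNnontriv, ?_⟩
    intro A C hcompl
    set f : ↥N →ₗ[B] ↥N := A.subtype ∘ₗ (A.linearProjOfIsCompl C hcompl) with hf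
    have hfA : ∀ a : ↥N, a ∈ A → f a = a := by
      intro a ha
      show A.subtype ((A.linearProjOfIsCompl C hcompl) a) = a
      rw [show (A.linearProjOfIsCompl C hcompl) a = ⟨a, ha⟩ from
        Submodule.linearProjOfIsCompl_apply_left hcompl ⟨a, ha⟩]
      rfl
    have hfC : ∀ c : ↥N, c ∈ C → f c = 0 := by
      intro c hc
      show A.subtype ((A.linearProjOfIsCompl C hcompl) c) = 0
      rw [show (A.linearProjOfIsCompl C hcompl) c = 0 from
        Submodule.linearProjOfIsCompl_apply_right hcompl ⟨c, hc⟩]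
      rfl
    have hff : ∀ v, f (f v) = f v := by
      intro v
      exact hfA (f v) (Submodule.coe_mem ((A.linearProjOfIsCompl C hcompl) v))
    set zN : Fin (n-1) → ↥N := fun i => ⟨z i, hzmem i⟩ with hzN
    set uN : Fin n → ↥N := fun j => ⟨usingle j, humem j⟩ with huN
    have hφuN : ∀ j, φ • uN j = 0 := fun j => Subtype.ext (hφus j)
    have hφzN : ∀ i, φ • zN i = uN (cstF n i) := fun i => Subtype.ext (hφz i)
    have hψzN : ∀ i, ψ • zN i = uN (sucF n i) := fun i => Subtype.ext (hψz i)
    -- coefficients of f on the u's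
    have hfu_memk : ∀ j, (↑(f (uN j)) : Fin n → V) ∈ Submodule.span k (Set.range usingle) := by
      intro j
      apply hstab_u
      apply hker _ (f (uN j)).2
      have h1 : φ • f (uN j) = 0 := by rw [← map_smul, hφuN, map_zero]
      calc φ • (↑(f (uN j)) : Fin n → V) = ↑(φ • f (uN j)) := rfl
        _ = 0 := by rw [h1]; rfl
    choose S hS using fun j => (Submodule.mem_span_range_iff_exists_fun k).1 (hfu_memk j)
    -- coefficients of f on the z's
    have hfz_memk : ∀ i, (↑(f (zN i)) : Fin n → V)
        ∈ Submodule.span k (Set.range (Sum.elim z usingle)) := by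
      intro i
      have h1 : (↑(f (zN i)) : Fin n → V) ∈ Submodule.restrictScalars k N := (f (zN i)).2
      rw [hspan_eq] at h1
      exact h1
    choose cz hcz using fun i => (Submodule.mem_span_range_iff_exists_fun k).1 (hfz_memk i)
    -- the two matrix relations
    have hrelφ : ∀ i, ∑ i', cz i (Sum.inl i') • usingle (cstF n i')
        = ∑ p, S (cstF n i) p • usingle p := by
      intro i
      have h1 : φ • f (zN i) = f (uN (cstF n i)) := by rw [← map_smul, hφzN]
      have h2 : φ • (↑(f (zN i)) : Fin n → V) = ↑(f (uN (cstF n i))) := by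
        calc φ • (↑(f (zN i)) : Fin n → V) = ↑(φ • f (zN i)) := rfl
          _ = ↑(f (uN (cstF n i))) := by rw [h1]
      rw [← hφsum (cz i), hcz i, h2, ← hS (cstF n i)]
    have hrelψ : ∀ i, ∑ i', cz i (Sum.inl i') • usingle (sucF n i')
        = ∑ p, S (sucF n i) p • usingle p := by
      intro i
      have h1 : ψ • f (zN i) = f (uN (sucF n i)) := by rw [← map_smul, hψzN]
      have h2 : ψ • (↑(f (zN i)) : Fin n → V) = ↑(f (uN (sucF n i))) := by
        calc ψ • (↑(f (zN i)) : Fin n → V) = ↑(ψ • f (zN i)) := rfl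
          _ = ↑(f (uN (sucF n i))) := by rw [h1]
      rw [← hψsum (cz i), hcz i, h2, ← hS (sucF n i)]
    -- scalar equations
    have eqA : ∀ i i₀, S (cstF n i) (cstF n i₀) = cz i (Sum.inl i₀) := by
      intro i i₀
      have h1 := congrFun (hrelφ i) (cstF n i₀)
      rw [evalz (fun i' => cz i (Sum.inl i')) (cstF n) (cstF_inj n) i₀, evalu] at h1
      exact (kcancel2 _ _ h1).symm
    have eqB : ∀ i i₀, S (sucF n i) (sucF n i₀) = cz i (Sum.inl i₀) := by
      intro i i₀
      have h1 := congrFun (hrelψ i) (sucF n i₀)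
      rw [evalz (fun i' => cz i (Sum.inl i')) (sucF n) (sucF_inj n) i₀, evalu] at h1
      exact (kcancel2 _ _ h1).symm
    have eqC : ∀ i, S (cstF n i) ⟨n-1, by omega⟩ = 0 := by
      intro i
      have h1 := congrFun (hrelφ i) ⟨n-1, by omega⟩
      rw [evalznot (fun i' => cz i (Sum.inl i')) (cstF n) _
        (fun i' hc => by
          have h5 : (cstF n i').1 = n-1 := by rw [hc]
          rw [cstF_val] at h5
          have := i'.2
          omega),
        evalu] at h1
      exact (kcancel _ h1.symm)
    have eqD : ∀ i, S (sucF n i) ⟨0, by omega⟩ = 0 := by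
      intro i
      have h1 := congrFun (hrelψ i) ⟨0, by omega⟩
      rw [evalznot (fun i' => cz i (Sum.inl i')) (sucF n) _
        (fun i' hc => by
          have h5 : (sucF n i').1 = 0 := by rw [hc]
          rw [sucF_val] at h5
          omega),
        evalu] at h1
      exact (kcancel _ h1.symm)
    -- Toeplitz structure of S
    have hshift : ∀ (a b : ℕ) (ha : a < n-1) (hb : b < n-1),
        S ⟨a+1, by omega⟩ ⟨b+1, by omega⟩ = S ⟨a, by omega⟩ ⟨b, by omega⟩ := by
      intro a b ha hb
      exact (eqB ⟨a, ha⟩ ⟨b, hb⟩).trans (eqA ⟨a, ha⟩ ⟨b, hb⟩).symm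
    have hdiagS : ∀ (t a b : ℕ) (ha : a + t < n) (hb : b + t < n),
        S ⟨a+t, ha⟩ ⟨b+t, hb⟩ = S ⟨a, by omega⟩ ⟨b, by omega⟩ := by
      intro t
      induction t with
      | zero => intro a b ha hb; rfl
      | succ t ih =>
        intro a b ha hb
        have h1 : S (⟨a+(t+1), ha⟩ : Fin n) (⟨b+(t+1), hb⟩ : Fin n)
            = S ⟨(a+t)+1, by omega⟩ ⟨(b+t)+1, by omega⟩ := rfl
        rw [h1, hshift (a+t) (b+t) (by omega) (by omega)]
        exact ih a b (by omega) (by omega)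
    have hSdiag : ∀ j : Fin n, S j j = S ⟨0, by omega⟩ ⟨0, by omega⟩ := by
      intro j
      rw [show j = (⟨0 + j.1, by have := j.2; omega⟩ : Fin n) from
        Fin.ext (show j.1 = 0 + j.1 by omega)]
      exact hdiagS j.1 0 0 (by omega) (by omega)
    have hSoff : ∀ j p : Fin n, j ≠ p → S j p = 0 := by
      intro j p hne
      have hv : j.1 ≠ p.1 := fun h => hne (Fin.ext h)
      rcases lt_or_gt_of_ne hv with hlt | hgt
      · have h1 := hdiagS (n - 1 - p.1) j.1 p.1 (by have := p.2; omega) (by have := p.2; omega)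
        have e2 : (⟨p.1 + (n - 1 - p.1), by have := p.2; omega⟩ : Fin n)
            = ⟨n-1, by omega⟩ := Fin.ext (show p.1 + (n - 1 - p.1) = n-1 by have := p.2; omega)
        rw [e2] at h1
        have h3 := eqC ⟨j.1 + (n - 1 - p.1), by have := p.2; have := j.2; omega⟩
        exact h1.symm.trans h3
      · have h1 := hdiagS p.1 (j.1 - p.1) 0 (by have := j.2; omega) (by have := p.2; omega)
        have e1 : (⟨j.1 - p.1 + p.1, by have := j.2; omega⟩ : Fin n) = j :=
          Fin.ext (show j.1 - p.1 + p.1 = j.1 by omega)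
        have e2 : (⟨0 + p.1, by have := p.2; omega⟩ : Fin n) = p :=
          Fin.ext (show 0 + p.1 = p.1 by omega)
        rw [e1, e2] at h1
        have h2 := eqD ⟨j.1 - p.1 - 1, by have := j.2; omega⟩
        have e3 : sucF n ⟨j.1 - p.1 - 1, by have := j.2; omega⟩
            = (⟨j.1 - p.1, by have := j.2; omega⟩ : Fin n) :=
          Fin.ext (show (sucF n ⟨j.1 - p.1 - 1, by have := j.2; omega⟩).1 = j.1 - p.1 by
            rw [sucF_val]; show j.1 - p.1 - 1 + 1 = j.1 - p.1; omega)
        rw [e3] at h2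
        exact h1.trans h2
    have hn0 : 0 < n := by omega
    -- f acts as the scalar c0 on the socle
    have hfuN : ∀ j, (↑(f (uN j)) : Fin n → V) = S ⟨0, hn0⟩ ⟨0, hn0⟩ • usingle j := by
      intro j
      rw [← hS j]
      rw [Finset.sum_eq_single j (fun p _ hne => by rw [hSoff j p (Ne.symm hne), zero_smul])
        (fun h => absurd (Finset.mem_univ j) h), hSdiag j]
    have hfuN' : ∀ j, f (uN j) = algebraMap k B (S ⟨0, hn0⟩ ⟨0, hn0⟩) • uN j := by
      intro j
      apply Subtype.ext
      show (↑(f (uN j)) : Fin n → V) = algebraMap k B (S ⟨0, hn0⟩ ⟨0, hn0⟩) • usingle j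
      rw [hfuN j, algebraMap_smul]
    have hc0idem : S ⟨0, hn0⟩ ⟨0, hn0⟩ * S ⟨0, hn0⟩ ⟨0, hn0⟩ = S ⟨0, hn0⟩ ⟨0, hn0⟩ := by
      have h1 := hff (uN ⟨0, hn0⟩)
      rw [hfuN', map_smul, hfuN', smul_smul, ← map_mul] at h1
      have h3 := congrArg Subtype.val h1
      rw [Submodule.coe_smul, Submodule.coe_smul, algebraMap_smul, algebraMap_smul,
        show (↑(uN (⟨0, hn0⟩ : Fin n)) : Fin n → V) = usingle ⟨0, hn0⟩ from rfl] at h3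
      have h4 := congrFun h3 ⟨0, hn0⟩
      rw [Pi.smul_apply, Pi.smul_apply, husingle, Pi.single_eq_same] at h4
      exact kcancel2 _ _ h4
    have hcz_inl : ∀ i i₀, cz i (Sum.inl i₀)
        = if i₀ = i then S ⟨0, hn0⟩ ⟨0, hn0⟩ else 0 := by
      intro i i₀
      rw [← eqA i i₀]
      by_cases h : i₀ = i
      · rw [if_pos h, h]; exact hSdiag _
      · rw [if_neg h]
        exact hSoff _ _ (fun hh => h ((cstF_inj n hh).symm))
    set wvN : Fin (n-1) → ↥N := fun i => ∑ j, algebraMap k B (cz i (Sum.inr j)) • uN j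
      with hwvN
    have hwv_coe : ∀ i, (↑(wvN i) : Fin n → V) = ∑ j, cz i (Sum.inr j) • usingle j := by
      intro i
      simp only [hwvN, AddSubmonoidClass.coe_finset_sum, Submodule.coe_smul, algebraMap_smul]
      rfl
    have hfz_eqN : ∀ i, f (zN i) = algebraMap k B (S ⟨0, hn0⟩ ⟨0, hn0⟩) • zN i + wvN i := by
      intro i
      apply Subtype.ext
      show (↑(f (zN i)) : Fin n → V)
        = algebraMap k B (S ⟨0, hn0⟩ ⟨0, hn0⟩) • z i + ↑(wvN i)
      rw [algebraMap_smul, hwv_coe, ← hcz i, Fintype.sum_sum_type]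
      congr 1
      rw [Finset.sum_eq_single i (fun i' _ hne => by rw [hcz_inl, if_neg hne, zero_smul])
        (fun h => absurd (Finset.mem_univ i) h), hcz_inl, if_pos rfl]
      rfl
    have hfwvN : ∀ i, f (wvN i) = algebraMap k B (S ⟨0, hn0⟩ ⟨0, hn0⟩) • wvN i := by
      intro i
      simp only [hwvN]
      rw [map_sum, Finset.smul_sum]
      apply Finset.sum_congr rfl
      intro j _
      rw [map_smul, hfuN' j, smul_smul, smul_smul, mul_comm]
    have hkey : ∀ i, algebraMap k B (S ⟨0, hn0⟩ ⟨0, hn0⟩) • wvN i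
        + algebraMap k B (S ⟨0, hn0⟩ ⟨0, hn0⟩) • wvN i = wvN i := by
      intro i
      have h1 := hff (zN i)
      rw [hfz_eqN i, map_add, map_smul, hfz_eqN i, hfwvN i, smul_add, smul_smul, ← map_mul,
        hc0idem, add_assoc] at h1
      exact add_left_cancel h1
    have hc01 : S ⟨0, hn0⟩ ⟨0, hn0⟩ = 0 ∨ S ⟨0, hn0⟩ ⟨0, hn0⟩ = 1 := by
      have h : S ⟨0, hn0⟩ ⟨0, hn0⟩ * (S ⟨0, hn0⟩ ⟨0, hn0⟩ - 1) = 0 := by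
        rw [mul_sub, hc0idem, mul_one, sub_self]
      rcases mul_eq_zero.1 h with h' | h'
      · exact Or.inl h'
      · exact Or.inr (sub_eq_zero.1 h')
    rcases hc01 with hc | hc
    · -- f = 0, hence A = ⊥
      left
      have hwv0 : ∀ i, wvN i = 0 := by
        intro i
        have h1 := hkey i
        rw [hc, map_zero, zero_smul, zero_add] at h1
        exact h1.symm
      have hfz0 : ∀ i, f (zN i) = 0 := by
        intro i
        rw [hfz_eqN i, hc, map_zero, zero_smul, zero_add, hwv0 i]
      have hf0 : ∀ v : ↥N, f v = 0 := by
        have hle : N ≤ (LinearMap.ker f).map N.subtype := by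
          refine hN.trans_le (Submodule.span_le.2 ?_)
          rintro _ ⟨i, rfl⟩
          exact ⟨zN i, LinearMap.mem_ker.2 (hfz0 i), rfl⟩
        intro v
        obtain ⟨v', hv', hveq⟩ := hle v.2
        obtain rfl : v' = v := Subtype.ext hveq
        exact LinearMap.mem_ker.1 hv'
      rw [eq_bot_iff]
      intro a ha
      rw [Submodule.mem_bot, ← hfA a ha]
      exact hf0 a
    · -- f = id, hence C = ⊥
      right
      have hwv0 : ∀ i, wvN i = 0 := by
        intro i
        have h1 := hkey i
        rw [hc, map_one, one_smul] at h1
        exact add_eq_right.1 h1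
      have hfz1 : ∀ i, f (zN i) = zN i := by
        intro i
        rw [hfz_eqN i, hc, map_one, one_smul, hwv0 i, add_zero]
      have hfid : ∀ v : ↥N, f v = v := by
        have hle : N ≤ (LinearMap.ker (LinearMap.id - f)).map N.subtype := by
          refine hN.trans_le (Submodule.span_le.2 ?_)
          rintro _ ⟨i, rfl⟩
          refine ⟨zN i, LinearMap.mem_ker.2 ?_, rfl⟩
          show zN i - f (zN i) = 0
          rw [hfz1 i, sub_self]
        intro v
        obtain ⟨v', hv', hveq⟩ := hle v.2
        obtain rfl : v' = v := Subtype.ext hveq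
        have h3 : v' - f v' = 0 := LinearMap.mem_ker.1 hv'
        exact (sub_eq_zero.1 h3).symm
      rw [eq_bot_iff]
      intro cv hcv
      rw [Submodule.mem_bot]
      have h5 := hfC cv hcv
      rw [hfid cv] at h5
      exact h5
  refine ⟨⟨hLI, hspan_eq⟩, hsocle, hIndec, ?_⟩
  -- ### Length ###
  have hstabQ : ∀ (Q : Set (Fin (n-1) ⊕ Fin n)),
      (∀ i, Sum.inl i ∈ Q → (Sum.inr (cstF n i) ∈ Q ∧ Sum.inr (sucF n i) ∈ Q)) →
      ∀ v ∈ Submodule.span B (Sum.elim z usingle '' Q),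
        v ∈ Submodule.span k (Sum.elim z usingle '' Q) := by
    intro Q hQ
    apply aux_span_B_le_span_k φ ψ bdec
    · rintro _ ⟨s, hs, rfl⟩
      cases s with
      | inl i =>
        rw [Sum.elim_inl, hφz]
        exact Submodule.subset_span ⟨Sum.inr (cstF n i), (hQ i hs).1, rfl⟩
      | inr j =>
        rw [Sum.elim_inr, hφus]
        exact Submodule.zero_mem _
    · rintro _ ⟨s, hs, rfl⟩
      cases s with
      | inl i =>
        rw [Sum.elim_inl, hψz]
        exact Submodule.subset_span ⟨Sum.inr (sucF n i), (hQ i hs).2, rfl⟩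
      | inr j =>
        rw [Sum.elim_inr, hψus]
        exact Submodule.zero_mem _
  let Dfun : ℕ → Submodule B (Fin n → V) :=
    fun t => Submodule.span B (Sum.elim z usingle '' {s | posF n s < t})
  have hD_le : ∀ t, Dfun t ≤ N := by
    intro t
    apply Submodule.span_le.2
    rintro _ ⟨s, _, rfl⟩
    cases s with
    | inl i => exact hzmem i
    | inr j => exact humem j
  have hD_strict : ∀ t, t < 2*n-1 → Dfun t < Dfun (t+1) := by
    intro t ht
    have hQc : ∀ i, Sum.inl i ∈ {s | posF n s < t} →
        (Sum.inr (cstF n i) ∈ {s | posF n s < t} ∧ Sum.inr (sucF n i) ∈ {s | posF n s < t}) := by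
      intro i hi
      have hi' : n + i.1 < t := hi
      constructor
      · show posF n (Sum.inr (cstF n i)) < t
        rw [posF_inr, cstF_val]
        omega
      · show posF n (Sum.inr (sucF n i)) < t
        rw [posF_inr, sucF_val]
        omega
    obtain ⟨st, hst⟩ : ∃ s, posF n s = t := by
      by_cases h : t < n
      · exact ⟨Sum.inr ⟨t, h⟩, rfl⟩
      · refine ⟨Sum.inl ⟨t - n, by omega⟩, ?_⟩
        show n + (t - n) = t
        omega
    rw [SetLike.lt_iff_le_and_exists]
    refine ⟨Submodule.span_mono (Set.image_mono (fun s hs => by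
        show posF n s < t + 1
        have : posF n s < t := hs
        omega)),
      Sum.elim z usingle st, ?_, ?_⟩
    · exact Submodule.subset_span ⟨st, by show posF n st < t + 1; omega, rfl⟩
    · intro hmem
      have h1 := hstabQ _ hQc _ hmem
      have h2 : st ∉ {s | posF n s < t} := by
        show ¬ (posF n st < t)
        omega
      exact (hLI.notMem_span_image h2) h1
  have hNE : Nonempty {p' : Submodule B (Fin n → V) // p' ≤ N} := ⟨⟨⊥, bot_le⟩⟩
  have hfinKN : FiniteDimensional k
      ↥(Submodule.span k (Set.range (Sum.elim z usingle))) :=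
    FiniteDimensional.span_of_finite k (Set.finite_range _)
  have hrankKN : Module.finrank k
      ↥(Submodule.span k (Set.range (Sum.elim z usingle))) = 2*n-1 := by
    rw [finrank_span_eq_card hLI]
    simp only [Fintype.card_sum, Fintype.card_fin]
    omega
  let Fk : {p' : Submodule B (Fin n → V) // p' ≤ N}
      → Submodule k ↥(Submodule.span k (Set.range (Sum.elim z usingle))) :=
    fun P => Submodule.comap (Submodule.span k (Set.range (Sum.elim z usingle))).subtype
      (Submodule.restrictScalars k P.1)
  have hrle : ∀ (P : {p' : Submodule B (Fin n → V) // p' ≤ N}),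
      Submodule.restrictScalars k P.1 ≤ Submodule.span k (Set.range (Sum.elim z usingle)) := by
    intro P v hv
    have h2 : v ∈ Submodule.restrictScalars k N := P.2 hv
    rw [hspan_eq] at h2
    exact h2
  have hFk_strict : StrictMono Fk := by
    intro P Q hPQ
    have hle : Fk P ≤ Fk Q := fun v hv => hPQ.le hv
    refine lt_of_le_of_ne hle ?_
    intro heq
    have e1 := Submodule.map_comap_subtype
      (Submodule.span k (Set.range (Sum.elim z usingle))) (Submodule.restrictScalars k P.1)
    have e2 := Submodule.map_comap_subtype
      (Submodule.span k (Set.range (Sum.elim z usingle))) (Submodule.restrictScalars k Q.1)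
    rw [show Submodule.comap
        (Submodule.span k (Set.range (Sum.elim z usingle))).subtype
        (Submodule.restrictScalars k P.1) = Fk P from rfl, heq] at e1
    rw [inf_eq_right.2 (hrle P)] at e1
    rw [inf_eq_right.2 (hrle Q)] at e2
    have h3 : Submodule.restrictScalars k P.1 = Submodule.restrictScalars k Q.1 :=
      e1.symm.trans e2
    exact (ne_of_lt hPQ) (Subtype.ext (Submodule.restrictScalars_injective k _ _ h3))
  have hlenbound : ∀ p : LTSeries {p' : Submodule B (Fin n → V) // p' ≤ N},
      p.length ≤ 2*n-1 := by
    intro p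
    apply aux_strictmono_fin_le (fun i => Module.finrank k ↥(Fk (p.toFun i)))
    · intro a b hab
      exact Submodule.finrank_lt_finrank_of_lt (hFk_strict (p.strictMono hab))
    · intro i
      rw [← hrankKN]
      exact Submodule.finrank_le _
  show Order.krullDim (Submodule B ↥N) = _
  rw [Order.krullDim_eq_of_orderIso (Submodule.MapSubtype.orderIso N),
    Order.krullDim_eq_iSup_length]
  have hsup : (⨆ (p : LTSeries {p' : Submodule B (Fin n → V) // p' ≤ N}),
      (p.length : ℕ∞)) = ((2*n-1 : ℕ) : ℕ∞) := by
    apply le_antisymm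
    · exact iSup_le (fun p => Nat.cast_le.2 (hlenbound p))
    · let chain : LTSeries {p' : Submodule B (Fin n → V) // p' ≤ N} :=
        ⟨2*n-1, fun t => ⟨Dfun t.1, hD_le t.1⟩,
          fun i => (Subtype.mk_lt_mk (p := fun p' => p' ≤ N) (hx := hD_le _) (hy := hD_le _)).2 (hD_strict i.1 i.isLt)⟩
      exact le_iSup (fun (p : LTSeries {p' : Submodule B (Fin n → V) // p' ≤ N}) =>
        (p.length : ℕ∞)) chain
  rw [hsup]
end

section
/- Over the Kronecker algebra kQ with char k ≠ 2, the module W(2) (generated by x_(1), z₁ = y_(1) + x_(2), and y_(2) inside V² as above) contains two distinct 2-dimensional submodules U = kQ·z and U' = kQ·z' with z = x_(1)+y_(1)+x_(2)+y_(2) and z' = x_(1)−y_(1)−x_(2)+y_(2), satisfying U ∩ U' = 0; hence U ⊕ U' is a decomposable submodule of W(2) containing M(1) = kQ·z₁ (generated by (1/2)(z − z')), so the inclusion M(1) ⊂ W(2) is not uniform. -/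
section Kronecker

variable (K : Type*) [Field K]

/-- The first arrow of the Kronecker representation `V² = V_(1) ⊕ V_(2)`, where the
vertex-`a` space has basis `x₁, y₁, x₂, y₂` (coordinates `0,1,2,3`) and the
vertex-`b` space has basis `u₁, u₂`:  `α` sends `y_i ↦ u_i` and `x_i ↦ 0`. -/
noncomputable def kronAlpha : (Fin 4 → K) →ₗ[K] (Fin 2 → K) :=
  Matrix.mulVecLin !![0, 1, 0, 0; 0, 0, 0, 1]

/-- The second arrow `β`: it sends `x_i ↦ u_i` and `y_i ↦ 0`. -/
noncomputable def kronBeta : (Fin 4 → K) →ₗ[K] (Fin 2 → K) :=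
  Matrix.mulVecLin !![1, 0, 0, 0; 0, 0, 1, 0]

/-- A subrepresentation of `V²` is a pair of subspaces stable under both arrows. -/
def IsSubrep (Sa : Submodule K (Fin 4 → K)) (Sb : Submodule K (Fin 2 → K)) : Prop :=
  Sa.map (kronAlpha K) ≤ Sb ∧ Sa.map (kronBeta K) ≤ Sb

/-- Indecomposability of a subrepresentation `(Sa, Sb)`. -/
def IndecSubrep (Sa : Submodule K (Fin 4 → K)) (Sb : Submodule K (Fin 2 → K)) : Prop :=
  ¬ (Sa = ⊥ ∧ Sb = ⊥) ∧
  ∀ Pa Qa : Submodule K (Fin 4 → K), ∀ Pb Qb : Submodule K (Fin 2 → K),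
    IsSubrep K Pa Pb → IsSubrep K Qa Qb →
    Pa ⊔ Qa = Sa → Pb ⊔ Qb = Sb → Pa ⊓ Qa = ⊥ → Pb ⊓ Qb = ⊥ →
    (Pa = ⊥ ∧ Pb = ⊥) ∨ (Qa = ⊥ ∧ Qb = ⊥)

end Kronecker

section Aux
open Submodule

variable {K : Type*} [Field K]

lemma kron_alpha_apply (v : Fin 4 → K) : kronAlpha K v = ![v 1, v 3] := by
  funext i; fin_cases i <;>
    simp [kronAlpha, Matrix.mulVecLin, Matrix.mulVec, dotProduct, Fin.sum_univ_four]

lemma kron_beta_apply (v : Fin 4 → K) : kronBeta K v = ![v 0, v 2] := by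
  funext i; fin_cases i <;>
    simp [kronBeta, Matrix.mulVecLin, Matrix.mulVec, dotProduct, Fin.sum_univ_four]

lemma kron_subrep_span (v : Fin 4 → K) (Sb : Submodule K (Fin 2 → K))
    (h1 : ![v 1, v 3] ∈ Sb) (h2 : ![v 0, v 2] ∈ Sb) :
    IsSubrep K (span K {v}) Sb := by
  constructor <;> rw [Submodule.map_span, Set.image_singleton,
      span_singleton_le_iff_mem]
  · rw [kron_alpha_apply]; exact h1
  · rw [kron_beta_apply]; exact h2

lemma kron_subrep_sup {Pa Qa : Submodule K (Fin 4 → K)} {Pb Qb : Submodule K (Fin 2 → K)}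
    (hP : IsSubrep K Pa Pb) (hQ : IsSubrep K Qa Qb) :
    IsSubrep K (Pa ⊔ Qa) (Pb ⊔ Qb) := by
  constructor <;> rw [Submodule.map_sup]
  · exact sup_le_sup hP.1 hQ.1
  · exact sup_le_sup hP.2 hQ.2

end Aux

open Submodule in
/-- Over the Kronecker algebra with `char k ≠ 2`, the module `W(2)` (generated by
`x₁`, `z₁ = y₁ + x₂` and `y₂` in `V²`) contains the distinct 2-dimensional
submodules `U = kQ·z` and `U' = kQ·z'` with `z = x₁+y₁+x₂+y₂`, `z' = x₁−y₁−x₂+y₂`,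
satisfying `U ∩ U' = 0`; hence `U ⊕ U'` is a decomposable submodule of `W(2)`
containing `M(1) = kQ·z₁`, so the inclusion `M(1) ⊂ W(2)` is not uniform. -/
theorem kronecker_not_uniform
    (K : Type*) [Field K] (hchar : (2 : K) ≠ 0)
    (Ua : Submodule K (Fin 4 → K)) (hUa : Ua = span K {![1, 1, 1, 1]})
    (Ub : Submodule K (Fin 2 → K)) (hUb : Ub = span K {![(1 : K), 1]})
    (U'a : Submodule K (Fin 4 → K)) (hU'a : U'a = span K {![1, -1, -1, 1]})
    (U'b : Submodule K (Fin 2 → K)) (hU'b : U'b = span K {![(1 : K), -1]})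
    (Ma : Submodule K (Fin 4 → K)) (hMa : Ma = span K {![0, 1, 1, 0]})
    (Mb : Submodule K (Fin 2 → K)) (hMb : Mb = ⊤)
    (Wa : Submodule K (Fin 4 → K))
    (hWa : Wa = span K {![1, 0, 0, 0], ![0, 1, 1, 0], ![0, 0, 0, 1]})
    (Wb : Submodule K (Fin 2 → K)) (hWb : Wb = ⊤) :
    -- U, U', M(1) and W(2) are subrepresentations
    (IsSubrep K Ua Ub ∧ IsSubrep K U'a U'b ∧ IsSubrep K Ma Mb ∧ IsSubrep K Wa Wb) ∧
    -- U and U' are 2-dimensional and distinct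
    (Module.finrank K Ua + Module.finrank K Ub = 2 ∧
      Module.finrank K U'a + Module.finrank K U'b = 2 ∧ (Ua, Ub) ≠ (U'a, U'b)) ∧
    -- U ∩ U' = 0
    (Ua ⊓ U'a = ⊥ ∧ Ub ⊓ U'b = ⊥) ∧
    -- M(1) ⊆ U ⊕ U' ⊆ W(2)
    (Ma ≤ Ua ⊔ U'a ∧ Mb ≤ Ub ⊔ U'b ∧ Ua ⊔ U'a ≤ Wa ∧ Ub ⊔ U'b ≤ Wb) ∧
    -- U ⊕ U' is decomposable
    ¬ IndecSubrep K (Ua ⊔ U'a) (Ub ⊔ U'b) ∧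
    -- the inclusion M(1) ⊂ W(2) is not uniform
    ¬ (∀ Sa : Submodule K (Fin 4 → K), ∀ Sb : Submodule K (Fin 2 → K),
        IsSubrep K Sa Sb → Ma ≤ Sa → Mb ≤ Sb → Sa ≤ Wa → Sb ≤ Wb →
        IndecSubrep K Sa Sb) := by
  subst hUa hUb hU'a hU'b hMa hMb hWa hWb
  -- subrep facts
  have hU : IsSubrep K (span K {![1, 1, 1, 1]}) (span K {![(1 : K), 1]}) := by
    apply kron_subrep_span <;>
      · apply Submodule.subset_span
        show _ = _
        funext i; fin_cases i <;> norm_num <;> rfl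
  have hU' : IsSubrep K (span K {![1, -1, -1, 1]}) (span K {![(1 : K), -1]}) := by
    apply kron_subrep_span <;> simp [Submodule.mem_span_singleton]
  have hM : IsSubrep K (span K {![0, 1, 1, 0]}) (⊤ : Submodule K (Fin 2 → K)) :=
    ⟨le_top, le_top⟩
  have hW : IsSubrep K (span K {![1, 0, 0, 0], ![0, 1, 1, 0], ![0, 0, 0, 1]})
      (⊤ : Submodule K (Fin 2 → K)) := ⟨le_top, le_top⟩
  -- nonzero generators
  have hz4 : (![1, 1, 1, 1] : Fin 4 → K) ≠ 0 := by
    intro h; have := congrFun h 0; simp at this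
  have hz'4 : (![1, -1, -1, 1] : Fin 4 → K) ≠ 0 := by
    intro h; have := congrFun h 0; simp at this
  have hz2 : (![(1 : K), 1] : Fin 2 → K) ≠ 0 := by
    intro h; have := congrFun h 0; simp at this
  have hz'2 : (![(1 : K), -1] : Fin 2 → K) ≠ 0 := by
    intro h; have := congrFun h 0; simp at this
  -- intersections trivial
  have hinfA : span K {![1, 1, 1, 1]} ⊓ span K {![1, -1, -1, 1]}
      = (⊥ : Submodule K (Fin 4 → K)) := by
    rw [eq_bot_iff]
    rintro x ⟨h1, h2⟩
    rw [SetLike.mem_coe, Submodule.mem_span_singleton] at h1 h2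
    obtain ⟨c, rfl⟩ := h1
    obtain ⟨d, hd⟩ := h2
    have e0 := congrFun hd 0
    have e1 := congrFun hd 1
    simp at e0 e1
    have hc : c = 0 := by
      have h2c : 2 * c = 0 := by linear_combination -e0 - e1
      rcases mul_eq_zero.mp h2c with h | h
      · exact absurd h hchar
      · exact h
    simp [hc]
  have hinfB : span K {![(1 : K), 1]} ⊓ span K {![(1 : K), -1]}
      = (⊥ : Submodule K (Fin 2 → K)) := by
    rw [eq_bot_iff]
    rintro x ⟨h1, h2⟩
    rw [SetLike.mem_coe, Submodule.mem_span_singleton] at h1 h2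
    obtain ⟨c, rfl⟩ := h1
    obtain ⟨d, hd⟩ := h2
    have e0 := congrFun hd 0
    have e1 := congrFun hd 1
    simp at e0 e1
    have hc : c = 0 := by
      have h2c : 2 * c = 0 := by linear_combination -e0 - e1
      rcases mul_eq_zero.mp h2c with h | h
      · exact absurd h hchar
      · exact h
    simp [hc]
  -- distinctness
  have hne : ((span K {![1, 1, 1, 1]} : Submodule K (Fin 4 → K)), span K {![(1 : K), 1]})
      ≠ (span K {![1, -1, -1, 1]}, span K {![(1 : K), -1]}) := by
    intro h
    have hb : (span K {![(1 : K), 1]} : Submodule K (Fin 2 → K)) = span K {![(1 : K), -1]} :=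
      congrArg Prod.snd h
    have hmem : (![(1 : K), 1]) ∈ span K {![(1 : K), -1]} := by
      rw [← hb]; exact subset_span rfl
    rw [Submodule.mem_span_singleton] at hmem
    obtain ⟨c, hc⟩ := hmem
    have e0 := congrFun hc 0
    have e1 := congrFun hc 1
    simp at e0 e1
    exact hchar (by linear_combination -e0 - e1)
  -- M ≤ U ⊔ U'
  have hMle : span K {![0, 1, 1, 0]} ≤
      span K {![1, 1, 1, 1]} ⊔ (span K {![1, -1, -1, 1]} : Submodule K (Fin 4 → K)) := by
    rw [span_singleton_le_iff_mem, Submodule.mem_sup]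
    refine ⟨(2 : K)⁻¹ • ![1, 1, 1, 1], smul_mem _ _ (subset_span rfl),
      (-(2 : K)⁻¹) • ![1, -1, -1, 1], smul_mem _ _ (subset_span rfl), ?_⟩
    funext i; fin_cases i <;> simp <;> field_simp <;> ring
  have hMbeq : (⊤ : Submodule K (Fin 2 → K)) ≤
      span K {![(1 : K), 1]} ⊔ span K {![(1 : K), -1]} := by
    intro v _
    rw [Submodule.mem_sup]
    refine ⟨((v 0 + v 1) / 2) • ![1, 1], smul_mem _ _ (subset_span rfl),
      ((v 0 - v 1) / 2) • ![1, -1], smul_mem _ _ (subset_span rfl), ?_⟩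
    funext i; fin_cases i <;> simp <;> field_simp <;> ring
  -- U ⊔ U' ≤ W
  have hWle : span K {![1, 1, 1, 1]} ⊔ (span K {![1, -1, -1, 1]} : Submodule K (Fin 4 → K))
      ≤ span K {![1, 0, 0, 0], ![0, 1, 1, 0], ![0, 0, 0, 1]} := by
    apply sup_le <;> rw [span_singleton_le_iff_mem]
    · have : (![1, 1, 1, 1] : Fin 4 → K)
          = ![1, 0, 0, 0] + ![0, 1, 1, 0] + ![0, 0, 0, 1] := by
        funext i; fin_cases i <;> simp
      rw [this]
      exact add_mem (add_mem (subset_span (by simp)) (subset_span (by simp)))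
        (subset_span (by simp))
    · have : (![1, -1, -1, 1] : Fin 4 → K)
          = ![1, 0, 0, 0] + (-1 : K) • ![0, 1, 1, 0] + ![0, 0, 0, 1] := by
        funext i; fin_cases i <;> simp
      rw [this]
      exact add_mem (add_mem (subset_span (by simp)) (smul_mem _ _ (subset_span (by simp))))
        (subset_span (by simp))
  -- not indecomposable
  have hNotIndec : ¬ IndecSubrep K
      (span K {![1, 1, 1, 1]} ⊔ span K {![1, -1, -1, 1]})
      (span K {![(1 : K), 1]} ⊔ span K {![(1 : K), -1]}) := by
    rintro ⟨-, h2⟩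
    rcases h2 _ _ _ _ hU hU' rfl rfl hinfA hinfB with ⟨-, hb⟩ | ⟨-, hb⟩
    · exact hz2 (Submodule.span_singleton_eq_bot.mp hb)
    · exact hz'2 (Submodule.span_singleton_eq_bot.mp hb)
  refine ⟨⟨hU, hU', hM, hW⟩, ⟨?_, ?_, hne⟩, ⟨hinfA, hinfB⟩,
    ⟨hMle, hMbeq, hWle, le_top⟩, hNotIndec, ?_⟩
  · rw [finrank_span_singleton hz4, finrank_span_singleton hz2]
  · rw [finrank_span_singleton hz'4, finrank_span_singleton hz'2]
  · intro h
    exact hNotIndec (h _ _ (kron_subrep_sup hU hU') hMle hMbeq hWle le_top)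
end
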